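/- arXiv:1404.5876 — 6 statements merged into one kernel-verified Lean document; each statement's English description precedes it below -/
import Mathlib

section
/- For every m, n ∈ ℕ with m, n ≥ 1, the set CS_∞(ℝ^m, ℂ^n) is strongly 𝔠-algebrable in the algebra C(ℝ^m, ℂ^n): there exists a family (g_i)_{i∈I} of continuous maps ℝ^m → ℂ^n, indexed by a set I of cardinality 𝔠 (the continuum), such that for every N ∈ ℕ, every choice of distinct indices i₁, …, i_N ∈ I, and every nonzero polynomial P ∈ ℂ[z₁,…,z_N] with zero constant term, the map x ↦ P(g_{i₁}(x),…,g_{i_N}(x)) (where addition, scalar multiplication and multiplication on ℂ^n are taken coordinatewise) belongs to CS_∞(ℝ^m, ℂ^n); in particular it is not identically zero. -/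
open Cardinal Topology Real

section Helpers

noncomputable def greedyS (x : ℝ) : ℕ → ℝ
  | 0 => 0
  | (k+1) => greedyS x k + (if (1/2:ℝ)^k ≤ x - greedyS x k then (1/2:ℝ)^k else 0)


lemma greedy_invariant {x : ℝ} (h0 : 0 ≤ x) (h2 : x ≤ 2) (K : ℕ) :
    0 ≤ x - greedyS x K ∧ x - greedyS x K ≤ 2 * (1/2:ℝ)^K := by
  induction K with
  | zero => simpa [greedyS] using ⟨h0, h2⟩
  | succ k ih =>
    obtain ⟨h1, h2'⟩ := ih
    by_cases h : (1/2:ℝ)^k ≤ x - greedyS x k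
    · simp only [greedyS, h, if_pos]
      constructor
      · linarith
      · rw [pow_succ]; linarith
    · simp only [greedyS, h, if_neg, not_false_iff, add_zero]
      push_neg at h
      constructor
      · linarith
      · rw [pow_succ]; linarith

lemma greedy_partial_sum (x : ℝ) (K : ℕ) :
    ∑ k ∈ Finset.range K,
      cantorFunctionAux (1/2) (fun k => decide ((1/2:ℝ)^k ≤ x - greedyS x k)) k
      = greedyS x K := by
  induction K with
  | zero => simp [greedyS]
  | succ k ih =>
    rw [Finset.sum_range_succ, ih]
    by_cases h : (1/2:ℝ)^k ≤ x - greedyS x k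
    · rw [cantorFunctionAux_true (by simp only [decide_eq_true_eq]; exact h)]
      have : greedyS x (k+1) = greedyS x k + (1/2:ℝ)^k := by rw [greedyS, if_pos h]
      rw [this]
    · rw [cantorFunctionAux_false (by simp only [decide_eq_false_iff_not]; exact h)]
      have : greedyS x (k+1) = greedyS x k + 0 := by rw [greedyS, if_neg h]
      rw [this]

lemma cantor_surj {x : ℝ} (h0 : 0 ≤ x) (h2 : x ≤ 2) :
    ∃ a : ℕ → Bool, cantorFunction (1/2) a = x := by
  set a : ℕ → Bool := fun k => decide ((1/2:ℝ)^k ≤ x - greedyS x k) with ha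
  refine ⟨a, ?_⟩
  have hsum : Summable (cantorFunctionAux (1/2) a) :=
    summable_cantor_function a (by norm_num) (by norm_num)
  have h1 : Filter.Tendsto (fun K => ∑ k ∈ Finset.range K, cantorFunctionAux (1/2) a k)
      Filter.atTop (nhds (cantorFunction (1/2) a)) := hsum.hasSum.tendsto_sum_nat
  have heq : (fun K => ∑ k ∈ Finset.range K, cantorFunctionAux (1/2) a k)
      = fun K => greedyS x K := by
    funext K; exact greedy_partial_sum x K
  rw [heq] at h1
  have h2' : Filter.Tendsto (fun K => greedyS x K) Filter.atTop (nhds x) := by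
    have hb : Filter.Tendsto (fun K : ℕ => 2 * (1/2:ℝ)^K) Filter.atTop (nhds 0) := by
      simpa using (tendsto_pow_atTop_nhds_zero_of_lt_one (by norm_num : (0:ℝ) ≤ 1/2)
        (by norm_num)).const_mul 2
    have hd : Filter.Tendsto (fun K => x - greedyS x K) Filter.atTop (nhds 0) :=
      squeeze_zero (fun K => (greedy_invariant h0 h2 K).1)
        (fun K => (greedy_invariant h0 h2 K).2) hb
    have := (tendsto_const_nhds (x := x) (f := Filter.atTop (α := ℕ))).sub hd
    simpa using this
  exact tendsto_nhds_unique h1 h2'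



lemma cantor_continuous {c : ℝ} (h0 : 0 ≤ c) (h1 : c < 1) :
    Continuous (cantorFunction c) := by
  apply continuous_tsum (u := fun n => c ^ n)
  · intro n
    have : (fun a : ℕ → Bool => cantorFunctionAux c a n)
        = (fun b : Bool => cond b (c ^ n) 0) ∘ (fun a => a n) := rfl
    rw [this]
    exact Continuous.comp continuous_of_discreteTopology (continuous_apply n)
  · exact summable_geometric_of_lt_one h0 h1
  · intro n a
    rw [Real.norm_eq_abs, abs_of_nonneg (cantorFunctionAux_nonneg h0)]
    unfold cantorFunctionAux
    cases a n
    · simpa using pow_nonneg h0 n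
    · simp

lemma cantor_nonneg {c : ℝ} (h0 : 0 ≤ c) (a : ℕ → Bool) : 0 ≤ cantorFunction c a :=
  tsum_nonneg fun n => cantorFunctionAux_nonneg h0

lemma cantor_le_geom {c : ℝ} (h0 : 0 ≤ c) (h1 : c < 1) (a : ℕ → Bool) :
    cantorFunction c a ≤ (1 - c)⁻¹ := by
  rw [← tsum_geometric_of_lt_one h0 h1]
  apply Summable.tsum_le_tsum _ (summable_cantor_function a h0 h1) (summable_geometric_of_lt_one h0 h1)
  intro n
  unfold cantorFunctionAux
  cases a n
  · simpa using pow_nonneg h0 n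
  · simp



/-- bump function: 1 on [1/4,5/8], 0 outside (0,1) -/
noncomputable def chi (t : ℝ) : ℝ := max 0 (min 1 (min (4*t) ((8/3)*(1-t))))

lemma chi_continuous : Continuous chi := by
  unfold chi; fun_prop

lemma chi_zero {t : ℝ} (ht : t ∉ Set.Ioo (0:ℝ) 1) : chi t = 0 := by
  simp only [Set.mem_Ioo, not_and_or, not_lt] at ht
  rcases ht with h | h
  · have : 4 * t ≤ 0 := by linarith
    unfold chi
    rw [max_eq_left]
    exact le_trans (min_le_right _ _) (le_trans (min_le_left _ _) this)
  · have : (8/3) * (1 - t) ≤ 0 := by linarith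
    unfold chi
    rw [max_eq_left]
    exact le_trans (min_le_right _ _) (le_trans (min_le_right _ _) this)

lemma chi_one {t : ℝ} (h1 : 1/4 ≤ t) (h2 : t ≤ 5/8) : chi t = 1 := by
  unfold chi
  rw [min_eq_left (le_min (by linarith) (by linarith)), max_eq_right zero_le_one]

/-- The space-filling lemma -/
lemma SF (ι : Type) [Finite ι] :
    ∃ φ : ℝ → ι → ℂ, Continuous φ ∧ (∀ t, t ∉ Set.Ioo (0:ℝ) 1 → φ t = 0) ∧
      ∀ V : ι → ℂ, (∀ i, |(V i).re| ≤ 1 ∧ |(V i).im| ≤ 1) →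
        ∃ t ∈ Set.Icc (1/4:ℝ) (5/8), φ t = V := by
  classical
  obtain ⟨enc⟩ := nonempty_embedding_nat ι
  -- rows
  set row : ℕ → (ℕ → Bool) → (ℕ → Bool) := fun m a k => a (Nat.pair m k) with hrow
  set Φ : (ℕ → Bool) → ι → ℂ := fun a i =>
    ((cantorFunction (1/2) (row (2 * enc i) a) - 1 : ℝ) : ℂ) +
      ((cantorFunction (1/2) (row (2 * enc i + 1) a) - 1 : ℝ) : ℂ) * Complex.I with hΦ
  have hrowcont : ∀ m, Continuous (fun a : ℕ → Bool => row m a) :=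
    fun m => continuous_pi fun k => continuous_apply _
  have hΦcont : Continuous Φ := by
    refine continuous_pi fun i => ?_
    apply Continuous.add
    · exact Complex.continuous_ofReal.comp
        (((cantor_continuous (by norm_num) (by norm_num)).comp (hrowcont _)).sub continuous_const)
    · exact (Complex.continuous_ofReal.comp
        (((cantor_continuous (by norm_num) (by norm_num)).comp (hrowcont _)).sub
          continuous_const)).mul continuous_const
  -- embedding of Cantor space into [1/4, 5/8]
  set e : (ℕ → Bool) → ℝ := fun a => (cantorFunction (1/3) a + 1) / 4 with he
  have hecont : Continuous e := by
    exact ((cantor_continuous (by norm_num) (by norm_num)).add continuous_const).div_const 4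
  have heinj : Function.Injective e := by
    intro a b hab
    apply cantorFunction_injective (show (0:ℝ) < 1/3 by norm_num)
      (show (1:ℝ)/3 < 1/2 by norm_num)
    have h4 : (cantorFunction (1/3) a + 1) / 4 = (cantorFunction (1/3) b + 1) / 4 := hab
    have := (div_left_inj' (show (4:ℝ) ≠ 0 by norm_num)).mp h4
    linarith
  have hemem : ∀ a, e a ∈ Set.Icc (1/4 : ℝ) (5/8) := by
    intro a
    have h1 := cantor_nonneg (by norm_num : (0:ℝ) ≤ 1/3) a
    have h2 := cantor_le_geom (by norm_num : (0:ℝ) ≤ 1/3) (by norm_num) a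
    norm_num at h2
    constructor <;> [skip; skip] <;> simp only [he] <;> [linarith; linarith]
  have hce : IsClosedEmbedding e := hecont.isClosedEmbedding heinj
  obtain ⟨g, hg⟩ := ContinuousMap.exists_extension' hce ⟨Φ, hΦcont⟩
  refine ⟨fun t => chi t • g t, ?_, ?_, ?_⟩
  · exact (chi_continuous).smul g.continuous
  · intro t ht
    show chi t • g t = 0
    rw [chi_zero ht, zero_smul]
  · intro V hV
    -- build the digit sequence
    choose aRe haRe using fun i => cantor_surj
      (by linarith [abs_le.1 (hV i).1] : (0:ℝ) ≤ (V i).re + 1)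
      (by linarith [abs_le.1 (hV i).1] : (V i).re + 1 ≤ 2)
    choose aIm haIm using fun i => cantor_surj
      (by linarith [abs_le.1 (hV i).2] : (0:ℝ) ≤ (V i).im + 1)
      (by linarith [abs_le.1 (hV i).2] : (V i).im + 1 ≤ 2)
    set R : ℕ → (ℕ → Bool) := fun m =>
      if h : ∃ i, 2 * enc i = m then aRe h.choose
      else if h : ∃ i, 2 * enc i + 1 = m then aIm h.choose
      else fun _ => false with hR
    set a : ℕ → Bool := fun p => R (Nat.unpair p).1 (Nat.unpair p).2 with ha
    have hrowa : ∀ m, row m a = R m := by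
      intro m; funext k
      simp [ha, hrow, Nat.unpair_pair]
    have hRre : ∀ i, R (2 * enc i) = aRe i := by
      intro i
      have h : ∃ i', 2 * enc i' = 2 * enc i := ⟨i, rfl⟩
      have key : h.choose = i := enc.injective (by have := h.choose_spec; omega)
      rw [hR]
      simp only []
      rw [dif_pos h, key]
    have hRim : ∀ i, R (2 * enc i + 1) = aIm i := by
      intro i
      have h1 : ¬ ∃ i', 2 * enc i' = 2 * enc i + 1 := by
        rintro ⟨i', hi'⟩; omega
      have h : ∃ i', 2 * enc i' + 1 = 2 * enc i + 1 := ⟨i, rfl⟩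
      have key : h.choose = i := enc.injective (by have := h.choose_spec; omega)
      rw [hR]
      simp only []
      rw [dif_neg h1, dif_pos h, key]
    have hΦa : Φ a = V := by
      funext i
      rw [hΦ]
      simp only
      rw [hrowa, hrowa, hRre, hRim, haRe, haIm]
      apply Complex.ext <;> simp
    refine ⟨e a, hemem a, ?_⟩
    show chi (e a) • g (e a) = V
    rw [chi_one (hemem a).1 (hemem a).2, one_smul]
    have : g (e a) = Φ a := congrFun hg a
    rw [this, hΦa]



lemma sin_hit (r R : ℝ) : ∃ ρ : ℝ, R ≤ ρ ∧ 0 ≤ ρ ∧ ρ * Real.sin ρ = r := by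
  set M := max R |r| with hM
  set k := ⌈M⌉₊ with hk
  set A := π/2 + k * (2*π) with hA
  set B := A + π with hB
  have hpi := Real.pi_pos
  have hpi3 := Real.pi_gt_three
  have hkM : (k:ℝ) ≥ M := Nat.le_ceil M
  have hA_ge : A ≥ M := by
    have h2 : (k:ℝ) * 1 ≤ (k:ℝ) * (2*π) := by
      apply mul_le_mul_of_nonneg_left _ (Nat.cast_nonneg k)
      linarith
    rw [hA]; rw [mul_one] at h2; linarith
  have hA_pos : 0 < A := by
    have : (0:ℝ) ≤ (k:ℝ) * (2*π) := by positivity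
    rw [hA]; linarith
  have hsinA : Real.sin A = 1 := by
    rw [hA, Real.sin_add_nat_mul_two_pi, Real.sin_pi_div_two]
  have hsinB : Real.sin B = -1 := by
    rw [hB, Real.sin_add_pi, hsinA]
  have hAB : A ≤ B := by rw [hB]; linarith
  have hcont : ContinuousOn (fun ρ => ρ * Real.sin ρ) (Set.Icc A B) :=
    (continuous_id.mul Real.continuous_sin).continuousOn
  have hfA : A * Real.sin A = A := by rw [hsinA, mul_one]
  have hfB : B * Real.sin B = -B := by rw [hsinB]; ring
  have hr1 : r ≤ A := le_trans (le_trans (le_abs_self r) (le_max_right R |r|)) hA_ge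
  have hr2 : -B ≤ r := by
    have h1 : |r| ≤ A := le_trans (le_max_right R |r|) hA_ge
    have h2 := neg_abs_le r
    rw [hB]; linarith
  have := intermediate_value_Icc' hAB hcont
  have hmem : r ∈ Set.Icc ((fun ρ => ρ * Real.sin ρ) B) ((fun ρ => ρ * Real.sin ρ) A) := by
    simp only [hfA, hfB]
    exact ⟨hr2, hr1⟩
  obtain ⟨ρ, hρmem, hρ⟩ := this hmem
  refine ⟨ρ, ?_, ?_, hρ⟩
  · have : M ≤ A := hA_ge
    have : R ≤ M := le_max_left _ _
    linarith [hρmem.1]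
  · linarith [hρmem.1]



noncomputable def sfFun (ι : Type) [Finite ι] : ℝ → ι → ℂ := (SF ι).choose

lemma sfFun_cont (ι : Type) [Finite ι] : Continuous (sfFun ι) := (SF ι).choose_spec.1

lemma sfFun_zero (ι : Type) [Finite ι] {t : ℝ} (ht : t ∉ Set.Ioo (0:ℝ) 1) :
    sfFun ι t = 0 := (SF ι).choose_spec.2.1 t ht

lemma sfFun_hit (ι : Type) [Finite ι] {V : ι → ℂ}
    (hV : ∀ i, |(V i).re| ≤ 1 ∧ |(V i).im| ≤ 1) :
    ∃ t ∈ Set.Icc (1/4:ℝ) (5/8), sfFun ι t = V := (SF ι).choose_spec.2.2 V hV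

/-- the piece of the curve living on `[s, s+1]`. -/
noncomputable def piece (n : ℕ) (s : ℕ) (c : ℕ → Bool) (t : ℝ) : Fin n → ℂ :=
  fun j => ((Nat.unpair s).2 : ℂ) *
    sfFun ((Fin (Nat.unpair s).1 → Bool) × Fin n) (t - s) (fun i => c i.val, j)

lemma piece_cont (n s : ℕ) (c : ℕ → Bool) : Continuous (piece n s c) := by
  unfold piece
  refine continuous_pi fun j => continuous_const.mul ?_
  exact (continuous_apply _).comp ((sfFun_cont _).comp (continuous_id.sub continuous_const))

lemma piece_zero (n s : ℕ) (c : ℕ → Bool) {t : ℝ} (ht : t - s ∉ Set.Ioo (0:ℝ) 1) :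
    piece n s c t = 0 := by
  unfold piece
  funext j
  rw [sfFun_zero _ ht]
  simp

noncomputable def curve (n : ℕ) (c : ℕ → Bool) (t : ℝ) : Fin n → ℂ :=
  piece n ⌊t⌋₊ c t

lemma curve_nonpos (n : ℕ) (c : ℕ → Bool) {t : ℝ} (ht : t ≤ 0) : curve n c t = 0 := by
  unfold curve
  apply piece_zero
  rw [Nat.floor_eq_zero.2]
  · intro h
    simp only [Nat.cast_zero, sub_zero, Set.mem_Ioo] at h
    linarith [h.1]
  · rcases le_or_gt t 0 with h | h
    · exact lt_of_le_of_lt h one_pos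
    · exact lt_of_le_of_lt ht one_pos |>.trans_le le_rfl

lemma curve_eq_piece (n : ℕ) (c : ℕ → Bool) (s : ℕ) {t : ℝ}
    (h1 : (s:ℝ) ≤ t) (h2 : t ≤ s + 1) : curve n c t = piece n s c t := by
  rcases lt_or_eq_of_le h2 with h2' | h2'
  · have : ⌊t⌋₊ = s := by
      rw [Nat.floor_eq_iff (le_trans (Nat.cast_nonneg s) h1)]
      exact ⟨h1, by push_cast; linarith⟩
    unfold curve; rw [this]
  · -- t = s + 1
    have hfl : ⌊t⌋₊ = s + 1 := by
      rw [h2']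
      rw [show ((s:ℝ) + 1) = ((s+1 : ℕ) : ℝ) by push_cast; ring, Nat.floor_natCast]
    unfold curve
    rw [hfl]
    have e1 : t - ((s+1 : ℕ):ℝ) = 0 := by push_cast; linarith [h2']
    have e2 : t - (s:ℝ) = 1 := by linarith [h2']
    rw [piece_zero n (s+1) c (by rw [e1]; simp), piece_zero n s c (by rw [e2]; simp)]

lemma curve_continuous (n : ℕ) (c : ℕ → Bool) : Continuous (curve n c) := by
  rw [continuous_iff_continuousAt]
  intro t₀
  rcases lt_or_ge t₀ 0 with hneg | hpos
  · -- locally zero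
    have : curve n c =ᶠ[nhds t₀] (fun _ => 0) := by
      filter_upwards [Iio_mem_nhds hneg] with t ht
      exact curve_nonpos n c (le_of_lt ht)
    exact (continuousAt_const (y := (0 : Fin n → ℂ))).congr this.symm
  · rw [continuousAt_iff_continuous_left_right]
    constructor
    · -- left
      rcases eq_or_lt_of_le hpos with h0 | h0
      · -- t₀ = 0
      -- within Iic t₀ the function is 0
        have hev : curve n c =ᶠ[nhdsWithin t₀ (Set.Iic t₀)] (fun _ => 0) := by
          filter_upwards [self_mem_nhdsWithin] with t ht
          exact curve_nonpos n c (le_trans ht h0.symm.le)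
        have hval : curve n c t₀ = 0 := curve_nonpos n c h0.symm.le
        exact ContinuousWithinAt.congr_of_eventuallyEq continuousWithinAt_const hev hval
      · -- t₀ > 0; take s' with s' < t₀ ≤ s'+1
        set s' : ℕ := ⌈t₀⌉₊ - 1 with hs'
        have hceil : 1 ≤ ⌈t₀⌉₊ := by
          rw [Nat.one_le_ceil_iff]; exact h0
        have hlt : (s' : ℝ) < t₀ := by
          have := Nat.ceil_lt_add_one (le_of_lt h0)
          have h1 : ((⌈t₀⌉₊ : ℝ) - 1) < t₀ := by linarith
          rw [hs']
          push_cast [hceil]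
          linarith
        have hle : t₀ ≤ (s' : ℝ) + 1 := by
          have := Nat.le_ceil t₀
          rw [hs']
          push_cast [hceil]
          linarith
        refine ContinuousWithinAt.congr_of_eventuallyEq
          ((piece_cont n s' c).continuousAt.continuousWithinAt) ?_
          (curve_eq_piece n c s' (le_of_lt hlt) hle)
        filter_upwards [mem_nhdsWithin_of_mem_nhds (Ioi_mem_nhds hlt),
          self_mem_nhdsWithin] with t ht1 ht2
        exact curve_eq_piece n c s' (le_of_lt ht1) (le_trans ht2 hle)
    · -- right
      set s : ℕ := ⌊t₀⌋₊ with hs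
      have h1 : (s:ℝ) ≤ t₀ := Nat.floor_le hpos
      have h2 : t₀ < (s:ℝ) + 1 := Nat.lt_floor_add_one t₀
      refine ContinuousWithinAt.congr_of_eventuallyEq
        ((piece_cont n s c).continuousAt.continuousWithinAt) ?_
        (curve_eq_piece n c s h1 (le_of_lt h2))
      filter_upwards [mem_nhdsWithin_of_mem_nhds (Iio_mem_nhds h2),
        self_mem_nhdsWithin] with t ht1 ht2
      exact curve_eq_piece n c s (le_trans h1 ht2) (le_of_lt ht1)



lemma aeval_eq_eval'' {σ : Type*} (g : σ → ℂ) (p : MvPolynomial σ ℂ) :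
    MvPolynomial.aeval g p = MvPolynomial.eval g p := by
  rw [← MvPolynomial.coe_aeval_eq_eval]; rfl

lemma aeval_pi_apply {N n : ℕ} (v : Fin N → Fin n → ℂ) (P : MvPolynomial (Fin N) ℂ) (j : Fin n) :
    MvPolynomial.aeval v P j = MvPolynomial.eval (fun k => v k j) P := by
  have h := MvPolynomial.comp_aeval_apply (R := ℂ) (f := v)
    (Pi.evalAlgHom ℂ (fun _ : Fin n => ℂ) j) P
  rw [← aeval_eq_eval'']
  exact h

lemma eval_zero_coeff {N : ℕ} (P : MvPolynomial (Fin N) ℂ) :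
    MvPolynomial.eval (fun _ => (0:ℂ)) P = MvPolynomial.coeff 0 P := by
  have : (fun _ : Fin N => (0:ℂ)) = (0 : Fin N → ℂ) := rfl
  rw [this, MvPolynomial.eval_zero, MvPolynomial.constantCoeff_eq]

lemma eval_line {N : ℕ} (ζ : Fin N → ℂ) (P : MvPolynomial (Fin N) ℂ) (y : ℂ) :
    Polynomial.eval y (MvPolynomial.aeval (fun k => Polynomial.C (ζ k) * Polynomial.X) P)
      = MvPolynomial.eval (fun k => ζ k * y) P := by
  have h := MvPolynomial.comp_aeval_apply (R := ℂ)
    (f := fun k => Polynomial.C (ζ k) * Polynomial.X) (Polynomial.aeval y) P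
  simp only [map_mul, Polynomial.aeval_C, Polynomial.aeval_X, Algebra.algebraMap_self,
    RingHom.id_apply] at h
  rw [← aeval_eq_eval'']
  rw [← h, Polynomial.aeval_def]
  rfl

end Helpers

/-- `CSInf m X f` means `f : ℝ^m → X` is continuous and each fiber `f⁻¹({a})` is an
unbounded subset of `ℝ^m`; in particular such an `f` is surjective. -/
def CSInf (m : ℕ) (X : Type*) [TopologicalSpace X]
    (f : EuclideanSpace ℝ (Fin m) → X) : Prop :=
  Continuous f ∧ ∀ a : X, ¬ Bornology.IsBounded (f ⁻¹' {a})

theorem stmt5 (m n : ℕ) (hm : 1 ≤ m) (hn : 1 ≤ n) :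
    ∃ (ι : Type) (g : ι → EuclideanSpace ℝ (Fin m) → (Fin n → ℂ)),
      Cardinal.mk ι = Cardinal.continuum ∧
      (∀ i, Continuous (g i)) ∧
      ∀ (N : ℕ) (idx : Fin N → ι), Function.Injective idx →
        ∀ P : MvPolynomial (Fin N) ℂ, P ≠ 0 → MvPolynomial.coeff 0 P = 0 →
          CSInf m (Fin n → ℂ)
            (fun x => MvPolynomial.aeval (fun k => g (idx k) x) P) := by
  classical
  set u : EuclideanSpace ℝ (Fin m) → ℝ := fun x => ‖x‖ * Real.sin ‖x‖ with hu
  have hucont : Continuous u := continuous_norm.mul (Real.continuous_sin.comp continuous_norm)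
  have hufiber : ∀ (r C : ℝ), ∃ x : EuclideanSpace ℝ (Fin m), u x = r ∧ C ≤ ‖x‖ := by
    intro r C
    obtain ⟨ρ, hρR, hρ0, hρ⟩ := sin_hit r C
    have hnorm : ‖ρ • EuclideanSpace.single (⟨0, hm⟩ : Fin m) (1:ℝ)‖ = ρ := by
      rw [norm_smul, EuclideanSpace.norm_single]
      simp [abs_of_nonneg hρ0]
    refine ⟨ρ • EuclideanSpace.single (⟨0, hm⟩ : Fin m) (1:ℝ), ?_, ?_⟩
    · rw [hu]; simp only; rw [hnorm]; exact hρ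
    · rw [hnorm]; exact hρR
  refine ⟨ℕ → Bool, fun c x => curve n c (u x), ?_, ?_, ?_⟩
  · rw [← Cardinal.two_power_aleph0]
    simp [Cardinal.mk_arrow]
  · intro c; exact (curve_continuous n c).comp hucont
  · intro N idx hinj P hP0 hPc
    -- a point where P doesn't vanish
    have hζ : ∃ ζ : Fin N → ℂ, MvPolynomial.eval ζ P ≠ 0 := by
      by_contra h
      push_neg at h
      exact hP0 (MvPolynomial.funext fun x => by rw [h x, map_zero])
    obtain ⟨ζ, hζ⟩ := hζ
    set q : Polynomial ℂ :=
      MvPolynomial.aeval (fun k => Polynomial.C (ζ k) * Polynomial.X) P with hqdef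
    have hq : ∀ y : ℂ, q.eval y = MvPolynomial.eval (fun k => ζ k * y) P :=
      fun y => eval_line ζ P y
    have hq0 : q.eval 0 = 0 := by
      rw [hq]
      have h0 : (fun k : Fin N => ζ k * 0) = fun _ => (0:ℂ) := by funext k; ring
      rw [h0, eval_zero_coeff, hPc]
    have hq1 : q.eval 1 ≠ 0 := by
      rw [hq]
      have h1 : (fun k : Fin N => ζ k * 1) = ζ := by funext k; ring
      rw [h1]; exact hζ
    have hdeg : 0 < q.degree := by
      by_contra h
      push_neg at h
      have hC := Polynomial.eq_C_of_degree_le_zero h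
      rw [hC, Polynomial.eval_C] at hq0 hq1
      exact hq1 hq0
    have hsurj : ∀ b : ℂ, ∃ z : ℂ, q.eval z = b := by
      intro b
      have hdeg' : 0 < (q - Polynomial.C b).degree := by
        rwa [Polynomial.degree_sub_C hdeg]
      obtain ⟨z, hz⟩ := Complex.exists_root hdeg'
      refine ⟨z, ?_⟩
      have hz' : q.eval z - b = 0 := by simpa [Polynomial.IsRoot] using hz
      exact sub_eq_zero.mp hz'
    constructor
    · -- continuity
      apply continuous_pi
      intro j
      have hcoord : (fun x => MvPolynomial.aeval (fun k => curve n (idx k) (u x)) P j)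
          = fun x => MvPolynomial.eval (fun k => curve n (idx k) (u x) j) P := by
        funext x; exact aeval_pi_apply _ P j
      rw [hcoord]
      exact (MvPolynomial.continuous_eval P).comp
        (continuous_pi fun k => (continuous_apply j).comp
          ((curve_continuous n (idx k)).comp hucont))
    · intro a
      choose yy hyy using fun j : Fin n => hsurj (a j)
      -- separation of the indices
      have hsep : ∃ K : ℕ, ∀ K' : ℕ, K ≤ K' →
          Function.Injective (fun k : Fin N => (fun i : Fin K' => idx k i.val)) := by
        have hpt : ∀ p : Fin N × Fin N, p.1 ≠ p.2 → ∃ i : ℕ, idx p.1 i ≠ idx p.2 i := by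
          intro p hp
          by_contra h
          push_neg at h
          exact hp (hinj (funext h))
        set D : Fin N × Fin N → ℕ :=
          fun p => if h : p.1 ≠ p.2 then (hpt p h).choose else 0 with hD
        refine ⟨(Finset.univ.sup D) + 1, ?_⟩
        intro K' hK' k l hkl
        by_contra hne
        have hDlt : D (k, l) < K' :=
          lt_of_lt_of_le (Nat.lt_succ_of_le (Finset.le_sup (Finset.mem_univ (k,l)))) hK'
        have hd : idx k (D (k,l)) ≠ idx l (D (k,l)) := by
          have : D (k, l) = (hpt (k,l) hne).choose := by
            rw [hD]; simp only [ne_eq, hne, not_false_iff, dif_pos]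
          rw [this]
          exact (hpt (k,l) hne).choose_spec
        exact hd (congrFun hkl ⟨D (k,l), hDlt⟩)
      obtain ⟨K, hK⟩ := hsep
      -- radius
      set B : ℕ := Finset.univ.sup
        (fun p : Fin N × Fin n => ⌈‖ζ p.1 * yy p.2‖⌉₊) with hB
      set jrad : ℕ := B + 1 with hjrad
      have hjrad_ge : ∀ k j, ‖ζ k * yy j‖ ≤ (jrad : ℝ) := by
        intro k j
        calc ‖ζ k * yy j‖ ≤ (⌈‖ζ k * yy j‖⌉₊ : ℝ) := Nat.le_ceil _
        _ ≤ (B:ℝ) := by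
          have := Finset.le_sup (f := fun p : Fin N × Fin n => ⌈‖ζ p.1 * yy p.2‖⌉₊)
            (Finset.mem_univ (k,j))
          exact_mod_cast this
        _ ≤ (jrad:ℝ) := by rw [hjrad]; push_cast; linarith
      have hjrad_pos : (0:ℝ) < jrad := by rw [hjrad]; positivity
      set s : ℕ := Nat.pair K jrad with hs
      have hsK : (Nat.unpair s).1 = K := by rw [hs, Nat.unpair_pair]
      have hsj : (Nat.unpair s).2 = jrad := by rw [hs, Nat.unpair_pair]
      set K' : ℕ := (Nat.unpair s).1 with hK'
      set pat : Fin N → (Fin K' → Bool) := fun k => fun i => idx k i.val with hpat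
      have hpatinj : Function.Injective pat := hK K' (le_of_eq hsK.symm)
      set V : ((Fin K' → Bool) × Fin n) → ℂ := fun pj =>
        if h : ∃ k, pat k = pj.1 then (ζ h.choose * yy pj.2) / (jrad:ℂ) else 0 with hV
      have hVbound : ∀ pj, |(V pj).re| ≤ 1 ∧ |(V pj).im| ≤ 1 := by
        intro pj
        rw [hV]
        by_cases h : ∃ k, pat k = pj.1
        · simp only [h, dif_pos]
          have habs : ‖(ζ h.choose * yy pj.2) / (jrad:ℂ)‖ ≤ 1 := by
            rw [norm_div]
            have : ‖((jrad:ℕ):ℂ)‖ = (jrad:ℝ) := by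
              simp
            rw [this, div_le_one hjrad_pos]
            exact hjrad_ge _ _
          exact ⟨le_trans (Complex.abs_re_le_norm _) habs,
            le_trans (Complex.abs_im_le_norm _) habs⟩
        · simp only [h, dif_neg, not_false_iff]
          norm_num
      obtain ⟨t', ht'mem, ht'⟩ := sfFun_hit ((Fin K' → Bool) × Fin n) hVbound
      set t : ℝ := (s:ℝ) + t' with ht
      have hcurve : ∀ k : Fin N, curve n (idx k) t = fun j => ζ k * yy j := by
        intro k
        rw [ht, curve_eq_piece n (idx k) s (by linarith [ht'mem.1]) (by linarith [ht'mem.2])]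
        unfold piece
        funext j
        have harg : (s:ℝ) + t' - s = t' := by ring
        rw [harg]
        show ((Nat.unpair s).2 : ℂ) * sfFun ((Fin K' → Bool) × Fin n) t' (pat k, j) = ζ k * yy j
        rw [ht']
        have hex : ∃ k'', pat k'' = pat k := ⟨k, rfl⟩
        have hch : hex.choose = k := hpatinj hex.choose_spec
        have hVval : V (pat k, j) = (ζ k * yy j) / (jrad:ℂ) := by
          rw [hV]
          simp only [hex, dif_pos]
          rw [hch]
        rw [hVval, hsj]
        have hjne : ((jrad:ℕ):ℂ) ≠ 0 := by
          exact Nat.cast_ne_zero.2 (by omega : jrad ≠ 0)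
        field_simp
      have hF : ∀ x, u x = t →
          MvPolynomial.aeval (fun k => curve n (idx k) (u x)) P = a := by
        intro x hx
        funext j
        rw [aeval_pi_apply]
        have hfun : (fun k => curve n (idx k) (u x) j) = fun k => ζ k * yy j := by
          funext k; rw [hx, hcurve k]
        rw [hfun, ← hq, hyy]
      intro hbd
      obtain ⟨C, hC⟩ := isBounded_iff_forall_norm_le.1 hbd
      obtain ⟨x, hx, hxnorm⟩ := hufiber t (C+1)
      have hxmem : x ∈ (fun x =>
          MvPolynomial.aeval (fun k => curve n (idx k) (u x)) P) ⁻¹' {a} := by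
        simp only [Set.mem_preimage, Set.mem_singleton_iff]
        exact hF x hx
      linarith [hC x hxmem]
end

section
/- Let X be a nonempty Hausdorff topological space. The following assertions are equivalent: (a) X is a σ-Peano space; (b) there exists a continuous map f : ℝ → X such that for every a ∈ X the preimage f⁻¹({a}) is an unbounded subset of ℝ (in particular f is surjective); (c) there exists a continuous surjection from ℝ onto X. -/
open Metric Set Filter Topology

/-- In a connected set, any two points can be joined by an ε-chain inside the set. -/
lemma exists_chain_of_isPreconnected {P : Type*} [MetricSpace P] {S : Set P}
    (hS : IsPreconnected S) {x y : P} (hx : x ∈ S) (hy : y ∈ S) {θ : ℝ} (hθ : 0 < θ) :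
    ∃ l : List P, l.head? = some x ∧ l.getLast? = some y ∧ (∀ z ∈ l, z ∈ S) ∧
      l.Chain' (fun a b => dist a b < θ) := by
  classical
  set R : Set P := {z | z ∈ S ∧ ∃ l : List P, l.head? = some x ∧ l.getLast? = some z ∧
      (∀ w ∈ l, w ∈ S) ∧ l.Chain' (fun a b => dist a b < θ)} with hR
  have hxR : x ∈ R := ⟨hx, [x], rfl, rfl, by simpa using hx, List.isChain_singleton _⟩
  -- extension property
  have hext : ∀ z ∈ R, ∀ p ∈ S, dist z p < θ → p ∈ R := by
    rintro z ⟨hzS, l, hh, hl, hmem, hch⟩ p hp hd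
    refine ⟨hp, l ++ [p], ?_, ?_, ?_, ?_⟩
    · cases l with
      | nil => simp at hh
      | cons a t => simpa using hh
    · simp
    · intro w hw
      rcases List.mem_append.1 hw with h | h
      · exact hmem w h
      · simp at h; subst h; exact hp
    · refine hch.append (by simp) ?_
      intro a ha b hb
      simp at hb; subst hb
      rw [hl] at ha; simp at ha; subst ha; exact hd
  -- clopen argument via preconnectedness
  have hyR : y ∈ R := by
    by_contra hyR
    set u : Set P := ⋃ z ∈ R, ball z θ with hu
    set v : Set P := ⋃ z ∈ S \ R, ball z θ with hv
    have hou : IsOpen u := isOpen_biUnion fun _ _ => isOpen_ball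
    have hov : IsOpen v := isOpen_biUnion fun _ _ => isOpen_ball
    have hcov : S ⊆ u ∪ v := by
      intro z hz
      by_cases h : z ∈ R
      · exact Or.inl (mem_biUnion h (mem_ball_self hθ))
      · exact Or.inr (mem_biUnion ⟨hz, h⟩ (mem_ball_self hθ))
    have h1 : (S ∩ u).Nonempty := ⟨x, hx, mem_biUnion hxR (mem_ball_self hθ)⟩
    have h2 : (S ∩ v).Nonempty := ⟨y, hy, mem_biUnion ⟨hy, hyR⟩ (mem_ball_self hθ)⟩
    obtain ⟨p, hpS, hpu, hpv⟩ := hS u v hou hov hcov h1 h2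
    obtain ⟨z₁, hz₁, hpz₁⟩ := mem_iUnion₂.1 hpu
    obtain ⟨z₂, hz₂, hpz₂⟩ := mem_iUnion₂.1 hpv
    have hpR : p ∈ R := hext z₁ hz₁ p hpS (by rwa [mem_ball, dist_comm] at hpz₁)
    have : z₂ ∈ R := hext p hpR z₂ hz₂.1 (by rwa [mem_ball] at hpz₂)
    exact hz₂.2 this
  exact hyR.2

/-- Uniform local connectedness of a compact locally connected metric space. -/
lemma exists_uniform_connected {P : Type*} [MetricSpace P] [CompactSpace P]
    [LocallyConnectedSpace P] {e : ℝ} (he : 0 < e) :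
    ∃ d : ℝ, 0 < d ∧ d ≤ e ∧ ∀ x y : P, dist x y < d →
      ∃ S : Set P, IsPreconnected S ∧ x ∈ S ∧ y ∈ S ∧ S ⊆ ball x e := by
  have hV : ∀ z : P, ∃ V : Set P, V ∈ nhds z ∧ IsPreconnected V ∧ V ⊆ ball z (e/2) := by
    intro z
    obtain ⟨V, hVU, hVo, hzV, hVc⟩ :=
      (locallyConnectedSpace_iff_subsets_isOpen_isConnected.1 ‹_›) z (ball z (e/2))
        (ball_mem_nhds _ (by linarith))
    exact ⟨V, hVo.mem_nhds hzV, hVc.isPreconnected, hVU⟩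
  choose V hVn hVc hVb using hV
  obtain ⟨W, hW, hWb⟩ := lebesgue_number_lemma isCompact_univ
    (fun z => isOpen_interior) (fun z _ => mem_iUnion.2 ⟨z, mem_interior_iff_mem_nhds.2 (hVn z)⟩)
  obtain ⟨d₀, hd₀, hd₀W⟩ := Metric.mem_uniformity_dist.1 hW
  refine ⟨min d₀ (e/2), lt_min hd₀ (by linarith), le_trans (min_le_right _ _) (by linarith),
    fun x y hxy => ?_⟩
  obtain ⟨z, hz⟩ := hWb x (mem_univ x)
  have hsub : ball x (min d₀ (e/2)) ⊆ V z := by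
    intro w hw
    refine interior_subset (hz ?_)
    exact hd₀W (show dist x w < d₀ by rw [dist_comm]; exact lt_of_lt_of_le hw (min_le_left _ _))
  have hxV : x ∈ V z := hsub (mem_ball_self (lt_min hd₀ (by linarith)))
  have hyV : y ∈ V z := hsub (by rwa [mem_ball, dist_comm])
  refine ⟨V z, hVc z, hxV, hyV, fun w hw => ?_⟩
  have h1 : dist w z < e/2 := hVb z hw
  have h2 : dist x z < e/2 := hVb z hxV
  rw [mem_ball]
  calc dist w x ≤ dist w z + dist z x := dist_triangle _ _ _
    _ < e/2 + e/2 := add_lt_add h1 (by rwa [dist_comm])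
    _ = e := by ring

set_option linter.unusedSectionVars false

section ListHelpers
variable {α : Type*}

lemma flatten_head?_eq {L : List (List α)} {a : α} (h : ∀ l ∈ L, l.head? = some a) :
    L.flatten = [] ∨ L.flatten.head? = some a := by
  induction L with
  | nil => exact Or.inl rfl
  | cons b t ih =>
    have hb : b.head? = some a := h b (by simp)
    cases b with
    | nil => simp at hb
    | cons x xs =>
      right
      simp at hb
      simp [hb]

lemma flatten_getLast?_eq {L : List (List α)} {a : α} (h : ∀ l ∈ L, l.getLast? = some a) :
    L.flatten = [] ∨ L.flatten.getLast? = some a := by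
  induction L with
  | nil => exact Or.inl rfl
  | cons b t ih =>
    rcases ih (fun l hl => h l (by simp [hl])) with h1 | h1
    · have hb : b.getLast? = some a := h b (by simp)
      simp only [List.flatten_cons, h1, List.append_nil]
      exact Or.inr hb
    · right
      rw [List.flatten_cons, List.getLast?_append, h1]
      rfl

/-- clamped list access -/
def clampGetD (b : List α) (r : ℕ) (d : α) : α := b.getD (min r (b.length - 1)) d

lemma clampGetD_mem {b : List α} (hb : b ≠ []) (r : ℕ) (d : α) : clampGetD b r d ∈ b := by
  have hlen : 0 < b.length := List.length_pos_iff.2 hb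
  have h : min r (b.length - 1) < b.length := lt_of_le_of_lt (min_le_right _ _) (by omega)
  rw [clampGetD, b.getD_eq_getElem d h]
  exact List.getElem_mem h

lemma clampGetD_zero {b : List α} {a : α} (h : b.head? = some a) (d : α) :
    clampGetD b 0 d = a := by
  cases b with
  | nil => simp at h
  | cons x xs => simp at h; simp [clampGetD, h]

lemma getD_length_sub_one {b : List α} {a : α} (h : b.getLast? = some a) (d : α) :
    b.getD (b.length - 1) d = a := by
  have hb : b ≠ [] := by rintro rfl; simp at h
  rw [List.getLast?_eq_getElem?] at h
  rw [List.getD_eq_getElem?_getD, h]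
  rfl

lemma clampGetD_last {b : List α} {a : α} {L : ℕ} (h : b.getLast? = some a)
    (hlen : b.length ≤ L) (hL : 0 < L) (d : α) : clampGetD b (L - 1) d = a := by
  have hb : b ≠ [] := by rintro rfl; simp at h
  have hlp : 0 < b.length := List.length_pos_iff.2 hb
  have : min (L - 1) (b.length - 1) = b.length - 1 := min_eq_right (by omega)
  rw [clampGetD, this, getD_length_sub_one h]

lemma clampGetD_adj {R : α → α → Prop} (hrefl : ∀ a, R a a) {b : List α} (hb : b ≠ [])
    (hc : b.Chain' R) (r : ℕ) (d : α) : R (clampGetD b r d) (clampGetD b (r + 1) d) := by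
  have hlp : 0 < b.length := List.length_pos_iff.2 hb
  by_cases hr : r + 1 ≤ b.length - 1
  · have h1 : min r (b.length - 1) = r := min_eq_left (by omega)
    have h2 : min (r + 1) (b.length - 1) = r + 1 := min_eq_left hr
    have hrlt : r < b.length - 1 := by omega
    have := List.isChain_iff_getElem.1 hc r (by omega)
    rw [clampGetD, clampGetD, h1, h2,
      b.getD_eq_getElem d (by omega), b.getD_eq_getElem d (by omega)]
    simpa [List.get_eq_getElem] using this
  · have h1 : min r (b.length - 1) = b.length - 1 := min_eq_right (by omega)
    have h2 : min (r + 1) (b.length - 1) = b.length - 1 := min_eq_right (by omega)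
    rw [clampGetD, clampGetD, h1, h2]
    exact hrefl _

end ListHelpers

section HM
variable (P : Type*) [MetricSpace P] [CompactSpace P] [ConnectedSpace P]
  [LocallyConnectedSpace P]

noncomputable def hmEps (k : ℕ) : ℝ := (diam (univ : Set P) + 1) * (1/2) ^ k

lemma hmEps_pos (k : ℕ) : 0 < hmEps P k := by
  have h1 := diam_nonneg (s := (univ : Set P))
  have h2 : (0:ℝ) < diam (univ : Set P) + 1 := by linarith
  exact mul_pos h2 (by positivity)

lemma dist_lt_hmEps_zero (x y : P) : dist x y < hmEps P 0 := by
  have h := dist_le_diam_of_mem (isCompact_univ : IsCompact (univ : Set P)).isBounded (mem_univ x) (mem_univ y)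
  simp only [hmEps, pow_zero, mul_one]
  linarith

noncomputable def hmDelta (k : ℕ) : ℝ :=
  if k = 0 then hmEps P 0 else (exists_uniform_connected (P := P) (hmEps_pos P k)).choose

lemma hmDelta_pos (k : ℕ) : 0 < hmDelta P k := by
  rw [hmDelta]
  split
  · exact hmEps_pos P 0
  · exact (exists_uniform_connected (P := P) (hmEps_pos P _)).choose_spec.1

lemma hmDelta_le (k : ℕ) : hmDelta P k ≤ hmEps P k := by
  rw [hmDelta]
  split
  · next h => rw [h]
  · exact (exists_uniform_connected (P := P) (hmEps_pos P _)).choose_spec.2.1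

lemma dist_lt_hmDelta_zero (x y : P) : dist x y < hmDelta P 0 := by
  rw [hmDelta, if_pos rfl]; exact dist_lt_hmEps_zero P x y

lemma hmDelta_spec {k : ℕ} {x y : P} (h : dist x y < hmDelta P k) :
    ∃ S : Set P, IsPreconnected S ∧ x ∈ S ∧ y ∈ S ∧ S ⊆ ball x (hmEps P k) := by
  by_cases hk : k = 0
  · subst hk
    exact ⟨univ, isPreconnected_univ, mem_univ x, mem_univ y,
      fun w _ => by rw [mem_ball]; exact dist_lt_hmEps_zero P w x⟩
  · rw [hmDelta, if_neg hk] at h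
    exact (exists_uniform_connected (P := P) (hmEps_pos P k)).choose_spec.2.2 x y h

variable {P}

/-- a chain from `x` to `y` with small steps staying near `x`. -/
lemma hm_exists_chain {k : ℕ} {x y : P} (h : dist x y < hmDelta P k) :
    ∃ l : List P, l.head? = some x ∧ l.getLast? = some y ∧
      (∀ z ∈ l, dist z x < hmEps P k) ∧ l.Chain' (fun a b => dist a b < hmDelta P (k+1)) := by
  obtain ⟨S, hSc, hxS, hyS, hSb⟩ := hmDelta_spec P h
  obtain ⟨l, h1, h2, h3, h4⟩ := exists_chain_of_isPreconnected hSc hxS hyS (hmDelta_pos P (k+1))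
  exact ⟨l, h1, h2, fun z hz => hSb (h3 z hz), h4⟩

open Classical in
noncomputable def hmC (k : ℕ) (x y : P) : List P :=
  if x = y then [x]
  else if h : dist x y < hmDelta P k then (hm_exists_chain h).choose else [x, y]

lemma hmC_spec {k : ℕ} {x y : P} (h : dist x y < hmDelta P k) :
    (hmC k x y).head? = some x ∧ (hmC k x y).getLast? = some y ∧
      (∀ z ∈ hmC k x y, dist z x < hmEps P k) ∧
      (hmC k x y).Chain' (fun a b => dist a b < hmDelta P (k+1)) := by
  rw [hmC]
  rcases eq_or_ne x y with rfl | hne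
  · rw [if_pos rfl]
    exact ⟨rfl, rfl, fun z hz => by simp at hz; simp [hz, hmEps_pos], List.isChain_singleton _⟩
  · rw [if_neg hne, dif_pos h]
    exact (hm_exists_chain h).choose_spec

lemma hmC_ne_nil (k : ℕ) (x y : P) : hmC k x y ≠ [] := by
  rw [hmC]
  split
  · simp
  · split
    · next h => 
      have := (hm_exists_chain h).choose_spec.1
      intro hn; rw [hn] at this; simp at this
    · simp

lemma hmC_self (k : ℕ) (x : P) : hmC k x x = [x] := if_pos rfl

structure HMStage (x₀ : P) (k : ℕ) where
  m : ℕ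
  g : ℕ → P
  hm : 0 < m
  hg0 : g 0 = x₀
  hlast : ∀ i, m - 1 ≤ i → g i = x₀
  hchain : ∀ i, dist (g i) (g (i+1)) < hmDelta P k
  hdense : ∀ p : P, ∃ i, dist p (g i) < hmDelta P k

def HMStage.zero (x₀ : P) : HMStage x₀ 0 where
  m := 1
  g := fun _ => x₀
  hm := one_pos
  hg0 := rfl
  hlast := fun _ _ => rfl
  hchain := fun _ => by simpa using hmDelta_pos P 0
  hdense := fun p => ⟨0, dist_lt_hmDelta_zero P p x₀⟩

end HM

lemma mem_of_getLast?' {α : Type*} {l : List α} {a : α} (h : l.getLast? = some a) : a ∈ l := by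
  rw [List.getLast?_eq_getElem?] at h
  exact List.mem_of_getElem? h

set_option maxHeartbeats 1600000 in
lemma HMStage.exists_next {P : Type*} [MetricSpace P] [CompactSpace P] [ConnectedSpace P]
    [LocallyConnectedSpace P] {x₀ : P} {k : ℕ} (s : HMStage x₀ k) :
    ∃ t : HMStage x₀ (k+1), ∃ L : ℕ, 0 < L ∧ t.m = s.m * L ∧
      ∀ i, dist (t.g i) (s.g (i / L)) ≤ hmEps P k := by
  classical
  obtain ⟨m, g, hm, hg0, hlast, hchain, hdense⟩ := s
  simp only at *
  -- a finite dense net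
  obtain ⟨T, hTsub, hTfin, hTcov⟩ := finite_cover_balls_of_compact
    (isCompact_univ : IsCompact (univ : Set P)) (hmDelta_pos P (k+1))
  set netL : List P := hTfin.toFinset.toList with hnetL
  have hnet : ∀ p : P, ∃ q ∈ netL, dist p q < hmDelta P (k+1) := by
    intro p
    obtain ⟨q, hq, hpq⟩ := mem_iUnion₂.1 (hTcov (mem_univ p))
    exact ⟨q, by simp [hnetL, hq], by rwa [mem_ball] at hpq⟩
  -- assignment of net points to indices
  have hipe : ∀ p : P, ∃ j, j ≤ m - 1 ∧ dist p (g j) < hmDelta P k := by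
    intro p
    obtain ⟨i, hi⟩ := hdense p
    by_cases h : i ≤ m - 1
    · exact ⟨i, h, hi⟩
    · refine ⟨m - 1, le_rfl, ?_⟩
      rw [hlast (m-1) le_rfl]
      rwa [hlast i (by omega)] at hi
  choose ip hip1 hip2 using hipe
  -- blocks
  set comps : ℕ → List (List P) := fun j =>
    ((netL.filter (fun p => ip p == j)).map
      (fun p => hmC k (g j) p ++ (hmC k (g j) p).reverse)) with hcomps
  set bl : ℕ → List P := fun j => (comps j).flatten ++ hmC k (g j) (g (j+1)) with hbl
  have hbr := fun j => hmC_spec (hchain j)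
  have hcomp : ∀ j, ∀ lp ∈ comps j,
      lp.head? = some (g j) ∧ lp.getLast? = some (g j) ∧
      (∀ z ∈ lp, dist z (g j) < hmEps P k) ∧
      lp.Chain' (fun a b => dist a b < hmDelta P (k+1)) ∧ lp ≠ [] := by
    intro j lp hlp
    rw [hcomps] at hlp
    obtain ⟨p, hpf, rfl⟩ := List.mem_map.1 hlp
    have hpj : ip p = j := by simpa using (List.mem_filter.1 hpf).2
    have hd : dist (g j) p < hmDelta P k := by
      rw [dist_comm, ← hpj]; exact hip2 p
    obtain ⟨hh, hl, hball, hch⟩ := hmC_spec hd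
    have hne := hmC_ne_nil k (g j) p
    refine ⟨?_, ?_, ?_, ?_, ?_⟩
    · rw [List.head?_append, hh]; rfl
    · rw [List.getLast?_append, List.getLast?_reverse, hh]; rfl
    · intro z hz
      rcases List.mem_append.1 hz with h | h
      · exact hball z h
      · exact hball z (List.mem_reverse.1 h)
    · refine hch.append ?_ ?_
      · rw [List.isChain_reverse]
        exact hch.imp (fun a b hab => by rwa [dist_comm] at hab)
      · intro a ha b hb
        rw [hl] at ha
        rw [List.head?_reverse, hl] at hb
        simp only [Option.mem_def, Option.some_inj] at ha hb
        rw [← ha, ← hb]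
        simpa using hmDelta_pos P (k+1)
    · simp [hne]
  have hblne : ∀ j, bl j ≠ [] := by
    intro j
    rw [hbl]
    simp [hmC_ne_nil]
  have hblhead : ∀ j, (bl j).head? = some (g j) := by
    intro j
    rw [hbl]
    rcases flatten_head?_eq (fun l hl => (hcomp j l hl).1) with h | h
    · simp only [List.head?_append, h]
      simp [(hbr j).1]
    · simp only [List.head?_append, h]; rfl
  have hbllast : ∀ j, (bl j).getLast? = some (g (j+1)) := by
    intro j
    rw [hbl, List.getLast?_append, (hbr j).2.1]
    rfl
  have hblball : ∀ j, ∀ z ∈ bl j, dist z (g j) < hmEps P k := by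
    intro j z hz
    rw [hbl] at hz
    rcases List.mem_append.1 hz with h | h
    · obtain ⟨lp, hlp, hzlp⟩ := List.mem_flatten.1 h
      exact (hcomp j lp hlp).2.2.1 z hzlp
    · exact (hbr j).2.2.1 z h
  have hblchain : ∀ j, (bl j).Chain' (fun a b => dist a b < hmDelta P (k+1)) := by
    intro j
    rw [hbl]
    have hnn : [] ∉ comps j := fun h => (hcomp j [] h).2.2.2.2 rfl
    refine List.IsChain.append ?_ (hbr j).2.2.2 ?_
    · rw [List.isChain_flatten hnn]
      constructor
      · exact fun l hl => (hcomp j l hl).2.2.2.1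
      · rw [List.isChain_iff_getElem]
        intro i hi
        intro a ha b hb
        rw [(hcomp j _ (List.getElem_mem _)).2.1] at ha
        rw [(hcomp j _ (List.getElem_mem _)).1] at hb
        simp only [Option.mem_def, Option.some_inj] at ha hb
        rw [← ha, ← hb]
        simpa using hmDelta_pos P (k+1)
    · intro a ha b hb
      rcases flatten_getLast?_eq (fun l hl => (hcomp j l hl).2.1) with h | h
      · rw [h] at ha; simp at ha
      · rw [h] at ha
        rw [(hbr j).1] at hb
        simp only [Option.mem_def, Option.some_inj] at ha hb
        rw [← ha, ← hb]
        simpa using hmDelta_pos P (k+1)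
  have hblmem : ∀ q ∈ netL, q ∈ bl (ip q) := by
    intro q hq
    rw [hbl]
    refine List.mem_append.2 (Or.inl ?_)
    refine List.mem_flatten.2 ⟨hmC k (g (ip q)) q ++ (hmC k (g (ip q)) q).reverse, ?_, ?_⟩
    · rw [hcomps]
      exact List.mem_map.2 ⟨q, List.mem_filter.2 ⟨hq, by simp⟩, rfl⟩
    · have hd : dist (g (ip q)) q < hmDelta P k := by rw [dist_comm]; exact hip2 q
      exact List.mem_append.2 (Or.inl (mem_of_getLast?' (hmC_spec hd).2.1))
  -- the common block length
  set L : ℕ := ((List.range m).map (fun j => (bl j).length)).sum + 1 with hLdef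
  have hLpos : 0 < L := Nat.succ_pos _
  have hfar : ∀ j, m ≤ j → bl j = [x₀] := by
    intro j hj
    have hfal : netL.filter (fun p => ip p == j) = [] := by
      rw [List.filter_eq_nil_iff]
      intro p _
      have := hip1 p
      simp only [beq_iff_eq]
      omega
    have hgj : g j = x₀ := hlast j (by omega)
    have hgj1 : g (j+1) = x₀ := hlast (j+1) (by omega)
    rw [hbl]
    simp only [hcomps, hfal, List.map_nil, List.flatten_nil, List.nil_append, hgj, hgj1]
    exact hmC_self k x₀
  have hlen : ∀ j, (bl j).length ≤ L := by
    intro j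
    by_cases hj : j < m
    · refine le_trans (List.single_le_sum (fun x _ => Nat.zero_le x) _ ?_) (Nat.le_succ _)
      exact List.mem_map.2 ⟨j, List.mem_range.2 hj, rfl⟩
    · rw [hfar j (by omega)]
      simp only [List.length_singleton]
      exact hLpos
  clear_value L
  clear hLdef
  -- the refined stage
  set g' : ℕ → P := fun i => clampGetD (bl (i / L)) (i % L) x₀ with hg'
  have hrefl : ∀ a : P, dist a a < hmDelta P (k+1) := fun a => by
    simpa using hmDelta_pos P (k+1)
  refine ⟨⟨m * L, g', Nat.mul_pos hm hLpos, ?_, ?_, ?_, ?_⟩, L, hLpos, rfl, ?_⟩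
  · -- g' 0 = x₀
    rw [hg']
    simp only [Nat.zero_div, Nat.zero_mod]
    rw [clampGetD_zero (hblhead 0), hg0]
  · -- tail is x₀
    intro i hi
    by_cases hbig : m * L ≤ i
    · have hj : m ≤ i / L := (Nat.le_div_iff_mul_le hLpos).2 hbig
      rw [hg']
      simp only
      rw [hfar (i / L) hj]
      simp [clampGetD]
    · have hieq : i = m * L - 1 := by omega
      obtain ⟨m₁, rfl⟩ : ∃ m₁, m = m₁ + 1 := ⟨m - 1, by omega⟩
      obtain ⟨L₁, hL1⟩ : ∃ L₁, L = L₁ + 1 := ⟨L - 1, by omega⟩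
      have hkey : (m₁ + 1) * L = (L₁ + m₁ * L) + 1 := by rw [hL1]; ring
      have hieq2 : i = L₁ + m₁ * L := by omega
      have hdiv : i / L = m₁ := by
        rw [hieq2, Nat.add_mul_div_right _ _ hLpos, Nat.div_eq_of_lt (by omega), Nat.zero_add]
      have hmod : i % L = L₁ := by
        rw [hieq2, Nat.add_mul_mod_self_right, Nat.mod_eq_of_lt (by omega)]
      rw [hg']
      simp only
      rw [hdiv, hmod, show L₁ = L - 1 by omega,
        clampGetD_last (hbllast m₁) (hlen m₁) hLpos]
      exact hlast (m₁ + 1) (by omega)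
  · -- chain
    intro i
    have hr : i % L < L := Nat.mod_lt _ hLpos
    have hi : L * (i / L) + i % L = i := Nat.div_add_mod i L
    by_cases hr1 : i % L + 1 < L
    · have h2 : i + 1 = L * (i / L) + (i % L + 1) := by omega
      have hdiv : (i+1) / L = i / L := by
        rw [h2, Nat.mul_add_div hLpos, Nat.div_eq_of_lt hr1, Nat.add_zero]
      have hmod : (i+1) % L = i % L + 1 := by
        rw [h2, Nat.mul_add_mod, Nat.mod_eq_of_lt hr1]
      rw [hg']
      simp only
      rw [hdiv, hmod]
      exact clampGetD_adj hrefl (hblne _) (hblchain _) _ x₀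
    · have hr1' : i % L + 1 = L := by omega
      have hi1 : i + 1 = L * (i / L + 1) := by
        have h3 : L * (i / L + 1) = L * (i / L) + L := by ring
        omega
      have hdiv : (i+1) / L = i / L + 1 := by rw [hi1, Nat.mul_div_cancel_left _ hLpos]
      have hmod : (i+1) % L = 0 := by rw [hi1]; exact Nat.mul_mod_right _ _
      rw [hg']
      simp only
      rw [hdiv, hmod, show i % L = L - 1 by omega,
        clampGetD_last (hbllast _) (hlen _) hLpos, clampGetD_zero (hblhead _)]
      exact hrefl _
  · -- density
    intro p
    obtain ⟨q, hq, hpq⟩ := hnet p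
    have hqbl := hblmem q hq
    obtain ⟨r, hrlt, hget⟩ := List.mem_iff_getElem.1 hqbl
    have hrL : r < L := lt_of_lt_of_le hrlt (hlen (ip q))
    refine ⟨ip q * L + r, ?_⟩
    have hdiv : (ip q * L + r) / L = ip q := by
      rw [Nat.mul_comm, Nat.mul_add_div hLpos, Nat.div_eq_of_lt hrL, Nat.add_zero]
    have hmod : (ip q * L + r) % L = r := by
      rw [Nat.mul_comm, Nat.mul_add_mod, Nat.mod_eq_of_lt hrL]
    rw [hg']
    simp only
    rw [hdiv, hmod]
    have hmin : min r ((bl (ip q)).length - 1) = r := min_eq_left (by omega)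
    rw [clampGetD, hmin, List.getD_eq_getElem _ _ hrlt, hget]
    exact hpq
  · -- alignment
    intro i
    exact le_of_lt (hblball _ _ (clampGetD_mem (hblne _) _ _))

section HM2
variable {P : Type*} [MetricSpace P] [CompactSpace P] [ConnectedSpace P]
  [LocallyConnectedSpace P]

noncomputable def hmNext {x₀ : P} {k : ℕ} (s : HMStage x₀ k) : HMStage x₀ (k+1) :=
  s.exists_next.choose

lemma hmNext_spec {x₀ : P} {k : ℕ} (s : HMStage x₀ k) :
    ∃ L : ℕ, 0 < L ∧ (hmNext s).m = s.m * L ∧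
      ∀ i, dist ((hmNext s).g i) (s.g (i / L)) ≤ hmEps P k :=
  s.exists_next.choose_spec

noncomputable def hmStages (x₀ : P) : ∀ k : ℕ, HMStage x₀ k
  | 0 => HMStage.zero x₀
  | (k+1) => hmNext (hmStages x₀ k)

noncomputable def hmF (x₀ : P) (k : ℕ) (t : ℝ) : P :=
  (hmStages x₀ k).g ⌊t * (hmStages x₀ k).m⌋₊

lemma hm_step (x₀ : P) (k : ℕ) (t : ℝ) :
    dist (hmF x₀ k t) (hmF x₀ (k+1) t) ≤ hmEps P k := by
  obtain ⟨L, hL, hmul, halign⟩ := hmNext_spec (hmStages x₀ k)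
  have h1 : hmStages x₀ (k+1) = hmNext (hmStages x₀ k) := rfl
  rw [dist_comm, hmF, hmF, h1]
  have hfloor : ⌊t * ((hmNext (hmStages x₀ k)).m : ℝ)⌋₊ / L = ⌊t * ((hmStages x₀ k).m : ℝ)⌋₊ := by
    rw [hmul]
    have h2 : (t : ℝ) * ((hmStages x₀ k).m * L : ℕ) = (t * (hmStages x₀ k).m) * L := by
      push_cast; ring
    rw [h2]
    have h3 : t * ((hmStages x₀ k).m : ℝ) = (t * (hmStages x₀ k).m) * L / L := by
      field_simp
    conv_rhs => rw [h3, Nat.floor_div_natCast]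
  rw [← hfloor]
  exact halign _

lemma hm_cauchy (x₀ : P) (t : ℝ) : CauchySeq (fun k => hmF x₀ k t) := by
  refine cauchySeq_of_le_geometric (1/2) (Metric.diam (Set.univ : Set P) + 1) (by norm_num)
    (fun n => ?_)
  exact hm_step x₀ n t

noncomputable def hmLim (x₀ : P) (t : ℝ) : P :=
  haveI : CompleteSpace P := complete_of_compact
  limUnder atTop (fun k => hmF x₀ k t)

lemma hm_tendsto (x₀ : P) (t : ℝ) :
    Tendsto (fun k => hmF x₀ k t) atTop (𝓝 (hmLim x₀ t)) := by
  haveI : CompleteSpace P := complete_of_compact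
  exact (hm_cauchy x₀ t).tendsto_limUnder

lemma hm_dist_lim (x₀ : P) (k : ℕ) (t : ℝ) :
    dist (hmF x₀ k t) (hmLim x₀ t) ≤ 2 * hmEps P k := by
  have h := dist_le_of_le_geometric_of_tendsto (1/2) (Metric.diam (Set.univ : Set P) + 1)
    (by norm_num) (fun n => hm_step x₀ n t) (hm_tendsto x₀ t) k
  have : (Metric.diam (Set.univ : Set P) + 1) * (1/2) ^ k / (1 - 1/2) = 2 * hmEps P k := by
    rw [hmEps]; ring
  linarith [h, this.symm.le]

lemma hmEps_tendsto (x₀ : P) : Tendsto (fun k => hmEps P k) atTop (𝓝 0) := by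
  have h : Tendsto (fun k : ℕ => (1/2 : ℝ) ^ k) atTop (𝓝 0) :=
    tendsto_pow_atTop_nhds_zero_of_lt_one (by norm_num) (by norm_num)
  have := h.const_mul (Metric.diam (Set.univ : Set P) + 1)
  simpa [hmEps] using this

lemma hm_floor_aux {a b : ℝ} (h : |a - b| ≤ 1) : ⌊a⌋₊ ≤ ⌊b⌋₊ + 1 := by
  have hab : a ≤ b + 1 := by cases abs_le.1 h; linarith
  by_cases hb : 0 ≤ b
  · calc ⌊a⌋₊ ≤ ⌊b + 1⌋₊ := Nat.floor_le_floor hab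
      _ = ⌊b⌋₊ + 1 := Nat.floor_add_one hb
  · have ha1 : a ≤ 1 := by linarith
    calc ⌊a⌋₊ ≤ ⌊(1:ℝ)⌋₊ := Nat.floor_le_floor ha1
      _ = 1 := Nat.floor_one
      _ ≤ ⌊b⌋₊ + 1 := by omega

lemma hmF_near (x₀ : P) (k : ℕ) {s t : ℝ}
    (h : dist s t < 1 / ((hmStages x₀ k).m : ℝ)) :
    dist (hmF x₀ k s) (hmF x₀ k t) ≤ hmEps P k := by
  set st := hmStages x₀ k
  have hmpos : (0:ℝ) < st.m := by exact_mod_cast st.hm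
  have hdiff : |s * st.m - t * st.m| ≤ 1 := by
    rw [← sub_mul, abs_mul, abs_of_pos hmpos]
    rw [Real.dist_eq] at h
    have := mul_lt_mul_of_pos_right h hmpos
    rw [div_mul_cancel₀ _ (ne_of_gt hmpos)] at this
    linarith
  have h1 : ⌊s * (st.m : ℝ)⌋₊ ≤ ⌊t * (st.m : ℝ)⌋₊ + 1 := hm_floor_aux hdiff
  have h2 : ⌊t * (st.m : ℝ)⌋₊ ≤ ⌊s * (st.m : ℝ)⌋₊ + 1 := hm_floor_aux (by rwa [abs_sub_comm])
  set i := ⌊s * (st.m : ℝ)⌋₊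
  set j := ⌊t * (st.m : ℝ)⌋₊
  have : i = j ∨ i = j + 1 ∨ j = i + 1 := by omega
  have hle := hmDelta_le P k
  rcases this with hij0 | hij | hji
  · rw [hmF, hmF]
    show dist (st.g i) (st.g j) ≤ _
    rw [hij0]
    simp [(hmEps_pos P k).le]
  · rw [hmF, hmF]
    show dist (st.g i) (st.g j) ≤ _
    rw [hij, dist_comm]
    exact le_trans (le_of_lt (st.hchain j)) hle
  · rw [hmF, hmF]
    show dist (st.g i) (st.g j) ≤ _
    rw [hji]
    exact le_trans (le_of_lt (st.hchain i)) hle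

lemma hmLim_continuous (x₀ : P) : Continuous (hmLim x₀) := by
  rw [Metric.continuous_iff]
  intro t ε hε
  obtain ⟨k, hk⟩ : ∃ k, 5 * hmEps P k < ε := by
    have := (hmEps_tendsto x₀).const_mul (5:ℝ)
    simp only [mul_zero] at this
    exact (this.eventually (gt_mem_nhds hε)).exists
  set st := hmStages x₀ k
  have hmpos : (0:ℝ) < st.m := by exact_mod_cast st.hm
  refine ⟨1 / (st.m : ℝ), by positivity, fun s hs => ?_⟩
  have hnear := hmF_near x₀ k hs
  have hb1 := hm_dist_lim x₀ k s
  have hb2 := hm_dist_lim x₀ k t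
  calc dist (hmLim x₀ s) (hmLim x₀ t)
      ≤ dist (hmLim x₀ s) (hmF x₀ k s) + dist (hmF x₀ k s) (hmF x₀ k t)
        + dist (hmF x₀ k t) (hmLim x₀ t) := dist_triangle4 _ _ _ _
    _ ≤ 2 * hmEps P k + hmEps P k + 2 * hmEps P k := by
        rw [dist_comm (hmLim x₀ s)]
        gcongr
    _ = 5 * hmEps P k := by ring
    _ < ε := hk

lemma hmLim_of_nonpos (x₀ : P) {t : ℝ} (ht : t ≤ 0) : hmLim x₀ t = x₀ := by
  haveI : CompleteSpace P := complete_of_compact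
  have hconst : ∀ k, hmF x₀ k t = x₀ := by
    intro k
    rw [hmF]
    have : t * ((hmStages x₀ k).m : ℝ) ≤ 0 :=
      mul_nonpos_of_nonpos_of_nonneg ht (Nat.cast_nonneg _)
    rw [Nat.floor_of_nonpos this]
    exact (hmStages x₀ k).hg0
  rw [hmLim]
  have : (fun k => hmF x₀ k t) = fun _ => x₀ := funext hconst
  rw [this]
  exact Tendsto.limUnder_eq tendsto_const_nhds

lemma hmLim_of_one_le (x₀ : P) {t : ℝ} (ht : 1 ≤ t) : hmLim x₀ t = x₀ := by
  haveI : CompleteSpace P := complete_of_compact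
  have hconst : ∀ k, hmF x₀ k t = x₀ := by
    intro k
    rw [hmF]
    refine (hmStages x₀ k).hlast _ ?_
    have h1 : ((hmStages x₀ k).m : ℝ) ≤ t * (hmStages x₀ k).m :=
      le_mul_of_one_le_left (Nat.cast_nonneg _) ht
    have := Nat.le_floor h1
    omega
  rw [hmLim]
  have : (fun k => hmF x₀ k t) = fun _ => x₀ := funext hconst
  rw [this]
  exact Tendsto.limUnder_eq tendsto_const_nhds

lemma hmLim_surjOn (x₀ : P) (p : P) : ∃ t ∈ Set.Icc (0:ℝ) 1, hmLim x₀ t = p := by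
  have hmem : p ∈ closure (hmLim x₀ '' Set.Icc 0 1) := by
    rw [Metric.mem_closure_iff]
    intro ε hε
    obtain ⟨k, hk⟩ : ∃ k, 3 * hmEps P k < ε := by
      have := (hmEps_tendsto x₀).const_mul (3:ℝ)
      simp only [mul_zero] at this
      exact (this.eventually (gt_mem_nhds hε)).exists
    set st := hmStages x₀ k
    obtain ⟨i, hi⟩ := st.hdense p
    set i' := min i (st.m - 1) with hi'
    have hgi : st.g i' = st.g i := by
      rcases le_or_gt i (st.m - 1) with h | h
      · rw [hi', min_eq_left h]
      · rw [st.hlast i (by omega), st.hlast i' (by omega)]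
    have hdp : dist p (st.g i') < hmDelta P k := by rw [hgi]; exact hi
    have hmpos : (0:ℝ) < st.m := by exact_mod_cast st.hm
    set t : ℝ := (i' : ℝ) / st.m with htdef
    have ht0 : (0:ℝ) ≤ t := by positivity
    have hi'm : i' < st.m := by have := st.hm; omega
    have ht1 : t ≤ 1 := by
      rw [htdef, div_le_one hmpos]
      exact_mod_cast le_of_lt hi'm
    have hFt : hmF x₀ k t = st.g i' := by
      rw [hmF]
      have : t * (st.m : ℝ) = i' := by
        rw [htdef, div_mul_cancel₀ _ (ne_of_gt hmpos)]
      rw [this, Nat.floor_natCast]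
    refine ⟨hmLim x₀ t, Set.mem_image_of_mem _ ⟨ht0, ht1⟩, ?_⟩
    have hb := hm_dist_lim x₀ k t
    rw [hFt] at hb
    have hdel := hmDelta_le P k
    calc dist p (hmLim x₀ t) ≤ dist p (st.g i') + dist (st.g i') (hmLim x₀ t) :=
          dist_triangle _ _ _
      _ ≤ hmDelta P k + 2 * hmEps P k := add_le_add (le_of_lt hdp) hb
      _ ≤ hmEps P k + 2 * hmEps P k := by linarith
      _ = 3 * hmEps P k := by ring
      _ < ε := hk
  have hcl : IsClosed (hmLim x₀ '' Set.Icc 0 1) :=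
    (isCompact_Icc.image (hmLim_continuous x₀)).isClosed
  rw [hcl.closure_eq] at hmem
  obtain ⟨t, ht, hte⟩ := hmem
  exact ⟨t, ht, hte⟩

/-- Hahn–Mazurkiewicz-type surjection for a Peano space, as a based loop on `[0,1]`
extended constantly. -/
theorem hm_main (x₀ : P) :
    ∃ f : ℝ → P, Continuous f ∧ (∀ t, t ≤ (0:ℝ) → f t = x₀) ∧
      (∀ t, (1:ℝ) ≤ t → f t = x₀) ∧ ∀ p : P, ∃ t ∈ Set.Icc (0:ℝ) 1, f t = p :=
  ⟨hmLim x₀, hmLim_continuous x₀, fun _ ht => hmLim_of_nonpos x₀ ht,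
    fun _ ht => hmLim_of_one_le x₀ ht, hmLim_surjOn x₀⟩

end HM2

/-- A σ-Peano-style family admits a curve with unbounded fibers. (Definitions inlined.) -/
theorem sigma_to_curve {X : Type*} [TopologicalSpace X] [T2Space X] (K : ℕ → Set X)
    (hmono : Monotone K)
    (hpeano : ∀ n, Nonempty ↥(K n) ∧ CompactSpace ↥(K n) ∧ ConnectedSpace ↥(K n) ∧
      LocallyConnectedSpace ↥(K n) ∧ TopologicalSpace.MetrizableSpace ↥(K n))
    (huniv : (⋃ n, K n) = Set.univ) :
    ∃ f : ℝ → X, Continuous f ∧ ∀ a : X, ¬ Bornology.IsBounded (f ⁻¹' {a}) := by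
  classical
  obtain ⟨x, hx0⟩ := (hpeano 0).1
  have hQ : ∀ n : ℕ, ∃ q : ℝ → X, Continuous q ∧ (∀ t, t ≤ (0:ℝ) → q t = x) ∧
      (∀ t, (1:ℝ) ≤ t → q t = x) ∧ ∀ a ∈ K n, ∃ t ∈ Icc (0:ℝ) 1, q t = a := by
    intro n
    obtain ⟨hne, hcomp, hconn, hlc, hmet⟩ := hpeano n
    letI : TopologicalSpace.MetrizableSpace ↥(K n) := hmet
    letI := TopologicalSpace.metrizableSpaceMetric ↥(K n)
    have hxK : x ∈ K n := hmono (Nat.zero_le n) hx0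
    obtain ⟨F, hFc, hF0, hF1, hFs⟩ := hm_main (P := ↥(K n)) ⟨x, hxK⟩
    refine ⟨fun t => (F t : X), continuous_subtype_val.comp hFc, ?_, ?_, ?_⟩
    · intro t ht; exact congrArg Subtype.val (hF0 t ht)
    · intro t ht; exact congrArg Subtype.val (hF1 t ht)
    · intro a ha
      obtain ⟨t, ht, hFt⟩ := hFs ⟨a, ha⟩
      exact ⟨t, ht, congrArg Subtype.val hFt⟩
  choose q hqc hq0 hq1 hqs using hQ
  set f : ℝ → X := fun t => q ⌊t⌋₊ (t - ⌊t⌋₊) with hf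
  -- the covering family
  set s : ℕ → Set ℝ := fun n => match n with
    | 0 => Iic (0:ℝ)
    | (n+1) => Icc (n:ℝ) (n+1) with hs
  have hcover : (⋃ i, s i) = univ := by
    rw [eq_univ_iff_forall]
    intro t
    rcases le_or_gt t 0 with ht | ht
    · exact mem_iUnion.2 ⟨0, ht⟩
    · refine mem_iUnion.2 ⟨⌊t⌋₊ + 1, ?_⟩
      exact ⟨Nat.floor_le ht.le, (Nat.lt_floor_add_one t).le⟩
  have hlf : LocallyFinite s := by
    intro t
    refine ⟨Ioo (t-1) (t+1), Ioo_mem_nhds (by linarith) (by linarith), ?_⟩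
    refine Set.Finite.subset (Finset.range (⌈t+1⌉₊ + 2)).finite_toSet ?_
    rintro (_ | n) hn
    · simp
    · simp only [Finset.coe_range, mem_setOf_eq, Set.mem_Iio]
      obtain ⟨y, hy1, hy2⟩ := hn
      have h1 : (n : ℝ) ≤ y := hy1.1
      have h2 : y < t + 1 := hy2.2
      have h3 : (n : ℝ) ≤ t + 1 := by linarith
      have : n ≤ ⌈t+1⌉₊ := Nat.cast_le.1 (le_trans h3 (Nat.le_ceil _))
      omega
  have hcont : Continuous f := by
    refine hlf.continuous hcover (fun i => ?_) (fun i => ?_)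
    · match i with
      | 0 => exact isClosed_Iic
      | (n+1) => exact isClosed_Icc
    · match i with
      | 0 =>
        refine (continuous_const (y := x)).continuousOn.congr ?_
        intro t ht
        simp only [hf]
        rw [Nat.floor_of_nonpos ht, Nat.cast_zero, sub_zero]
        exact hq0 0 t ht
      | (n+1) =>
        have hg : Continuous fun t : ℝ => q n (t - n) :=
          (hqc n).comp (continuous_id.sub continuous_const)
        refine hg.continuousOn.congr ?_
        intro t ht
        obtain ⟨ht1, ht2⟩ := ht
        rcases lt_or_eq_of_le ht2 with hlt | heq
        · have h0 : (0:ℝ) ≤ t := le_trans (Nat.cast_nonneg n) ht1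
          have hfl : ⌊t⌋₊ = n := (Nat.floor_eq_iff h0).2 ⟨ht1, hlt⟩
          simp only [hf]
          rw [hfl]
        · have h1 : q (n+1) (t - ((n+1:ℕ):ℝ)) = x :=
            hq0 (n+1) _ (le_of_eq (by rw [heq]; push_cast; ring))
          have h2 : q n (t - (n:ℝ)) = x :=
            hq1 n _ (le_of_eq (by rw [heq]; push_cast; ring))
          have hfl : ⌊t⌋₊ = n + 1 := by
            rw [heq, show ((n:ℝ) + 1) = ((n+1 : ℕ) : ℝ) by push_cast; ring, Nat.floor_natCast]
          simp only [hf]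
          rw [hfl, h1, h2]
  -- unbounded fibers
  refine ⟨f, hcont, fun a hbd => ?_⟩
  have ha : a ∈ ⋃ n, K n := by rw [huniv]; trivial
  obtain ⟨N, hN⟩ := mem_iUnion.1 ha
  have hpt : ∀ n, N ≤ n → ∃ r ∈ Icc (n:ℝ) ((n:ℝ)+1), f r = a := by
    intro n hn
    obtain ⟨t, ⟨ht0, ht1⟩, hqt⟩ := hqs n a (hmono hn hN)
    rcases lt_or_eq_of_le ht1 with hlt | heq
    · refine ⟨(n:ℝ) + t, ⟨by linarith, by linarith⟩, ?_⟩
      have h0 : (0:ℝ) ≤ (n:ℝ) + t := by positivity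
      have hfl : ⌊(n:ℝ) + t⌋₊ = n := (Nat.floor_eq_iff h0).2 ⟨by linarith, by linarith⟩
      simp only [hf]
      rw [hfl, show (n:ℝ) + t - n = t by ring]
      exact hqt
    · have hax : a = x := by rw [← hqt, heq, hq1 n 1 le_rfl]
      refine ⟨(n:ℝ), ⟨le_refl _, by linarith⟩, ?_⟩
      simp only [hf]
      rw [Nat.floor_natCast, sub_self, hax]
      exact hq0 n 0 le_rfl
  obtain ⟨R, hR⟩ := hbd.subset_closedBall 0
  obtain ⟨r, ⟨hr1, _⟩, hra⟩ := hpt (N + ⌈R⌉₊ + 1) (by omega)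
  have hrmem : r ∈ f ⁻¹' {a} := by simp [hra]
  have hdist := hR hrmem
  rw [Metric.mem_closedBall, Real.dist_eq, sub_zero] at hdist
  have hRr : r ≤ R := (abs_le.1 hdist).2
  push_cast at hr1
  have hRceil : R ≤ (⌈R⌉₊ : ℝ) := Nat.le_ceil R
  have hN0 : (0:ℝ) ≤ (N:ℝ) := Nat.cast_nonneg N
  linarith
/-- Second countability passes to Hausdorff continuous images of compact
second-countable spaces. -/
theorem secondCountable_image_aux {A X : Type*} [TopologicalSpace A] [TopologicalSpace X]
    [SecondCountableTopology A] [CompactSpace A] [T2Space X] {f : A → X}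
    (hf : Continuous f) (hsurj : Function.Surjective f) :
    SecondCountableTopology X := by
  classical
  set B := TopologicalSpace.countableBasis A with hB
  have hBc : B.Countable := TopologicalSpace.countable_countableBasis A
  have hBb := TopologicalSpace.isBasis_countableBasis A
  have hclosed : IsClosedMap f := hf.isClosedMap
  set V : Set (Set A) → Set X := fun S => (f '' (⋃₀ S)ᶜ)ᶜ with hV
  set C : Set (Set X) := V '' {S : Set (Set A) | S.Finite ∧ S ⊆ B} with hC
  have hCc : C.Countable := (Set.countable_setOf_finite_subset hBc).image _
  refine (TopologicalSpace.isTopologicalBasis_of_isOpen_of_nhds ?_ ?_).secondCountableTopology hCc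
  · rintro u ⟨S, ⟨hSf, hSB⟩, rfl⟩
    exact (hclosed _ (isOpen_sUnion fun t ht => hBb.isOpen (hSB ht)).isClosed_compl).isOpen_compl
  · intro y U hyU hU
    have hfib : IsCompact (f ⁻¹' {y}) := (isClosed_singleton.preimage hf).isCompact
    have hcov : f ⁻¹' {y} ⊆ ⋃ t ∈ {t ∈ B | t ⊆ f ⁻¹' U}, t := by
      intro a ha
      have haU : a ∈ f ⁻¹' U := by
        simp only [mem_preimage, mem_singleton_iff] at ha
        show f a ∈ U
        rw [ha]; exact hyU
      obtain ⟨v, hvB, hav, hvU⟩ :=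
        hBb.exists_subset_of_mem_open haU (hU.preimage hf)
      exact mem_biUnion ⟨hvB, hvU⟩ hav
    obtain ⟨S, hSsub, hSfin, hScov⟩ := hfib.elim_finite_subcover_image
      (fun t ht => hBb.isOpen ht.1) hcov
    refine ⟨V S, ⟨S, ⟨hSfin, fun t ht => (hSsub ht).1⟩, rfl⟩, ?_, ?_⟩
    · rw [hV]
      intro hmem
      obtain ⟨a, hac, hay⟩ := hmem
      have : a ∈ f ⁻¹' {y} := by simp [mem_preimage, hay]
      have := hScov this
      rw [mem_iUnion₂] at this
      obtain ⟨t, htS, hat⟩ := this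
      exact hac (mem_sUnion.2 ⟨t, htS, hat⟩)
    · intro z hz
      obtain ⟨a, rfl⟩ := hsurj z
      by_cases haS : a ∈ ⋃₀ S
      · obtain ⟨t, htS, hat⟩ := haS
        exact (hSsub htS).2 hat
      · exact absurd (Set.mem_image_of_mem f haS) hz
/-- Local connectedness passes through quotient maps. -/
theorem locallyConnected_of_isQuotientMap {A X : Type*} [TopologicalSpace A] [TopologicalSpace X]
    [LocallyConnectedSpace A] {f : A → X} (hq : Topology.IsQuotientMap f) :
    LocallyConnectedSpace X := by
  rw [locallyConnectedSpace_iff_connectedComponentIn_open]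
  intro F hF y hyF
  rw [← hq.isOpen_preimage]
  have key : f ⁻¹' connectedComponentIn F y =
      ⋃ a ∈ f ⁻¹' connectedComponentIn F y, connectedComponentIn (f ⁻¹' F) a := by
    apply Set.Subset.antisymm
    · intro a ha
      have haF : a ∈ f ⁻¹' F := connectedComponentIn_subset F y ha
      exact mem_biUnion ha (mem_connectedComponentIn haF)
    · rw [iUnion₂_subset_iff]
      intro a ha a' ha'
      have haF : f a ∈ F := connectedComponentIn_subset F y ha
      have himg : f '' connectedComponentIn (f ⁻¹' F) a ⊆ connectedComponentIn F (f a) := by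
        refine IsPreconnected.subset_connectedComponentIn ?_ ?_ ?_
        · exact (isPreconnected_connectedComponentIn).image f hq.continuous.continuousOn
        · exact Set.mem_image_of_mem f
            (mem_connectedComponentIn (connectedComponentIn_subset F y ha))
        · rintro z ⟨w, hw, rfl⟩
          exact connectedComponentIn_subset (f ⁻¹' F) a hw
      have : f a' ∈ connectedComponentIn F (f a) := himg (Set.mem_image_of_mem f ha')
      rwa [connectedComponentIn_eq (show f a ∈ connectedComponentIn F y from ha)]
  rw [key]
  exact isOpen_biUnion fun a _ => (hF.preimage hq.continuous).connectedComponentIn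

/-- Order-connected subsets of `ℝ` are locally connected. -/
theorem ordConnected_locallyConnected {s : Set ℝ} (hs : s.OrdConnected) :
    LocallyConnectedSpace ↥s := by
  rw [locallyConnectedSpace_iff_connected_subsets]
  intro x U hU
  rw [nhds_subtype] at hU
  obtain ⟨W, hW, hWU⟩ := hU
  obtain ⟨ε, hε, hball⟩ := Metric.mem_nhds_iff.1 hW
  refine ⟨Subtype.val ⁻¹' ball (x : ℝ) ε, ?_, ?_, ?_⟩
  · rw [nhds_subtype]
    exact Filter.preimage_mem_comap (ball_mem_nhds _ hε)
  · rw [← Topology.IsInducing.subtypeVal.isPreconnected_image]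
    rw [Subtype.image_preimage_coe, Real.ball_eq_Ioo]
    exact isPreconnected_iff_ordConnected.2 (hs.inter Set.ordConnected_Ioo)
  · exact fun z hz => hWU (hball hz)

/-- A Hausdorff continuous image of a "Peano package" is again one. -/
theorem peano_package_image {A X : Type*} [TopologicalSpace A] [TopologicalSpace X] [T2Space X]
    [CompactSpace A] [ConnectedSpace A] [LocallyConnectedSpace A]
    [TopologicalSpace.MetrizableSpace A] {f : A → X} (hf : Continuous f)
    (hsurj : Function.Surjective f) :
    Nonempty X ∧ CompactSpace X ∧ ConnectedSpace X ∧ LocallyConnectedSpace X ∧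
      TopologicalSpace.MetrizableSpace X := by
  letI : MetricSpace A := TopologicalSpace.metrizableSpaceMetric A
  haveI : SecondCountableTopology A := by infer_instance
  haveI hcx : CompactSpace X := by
    constructor
    rw [← hsurj.range_eq]
    exact isCompact_range hf
  haveI hconn : ConnectedSpace X := by
    have h1 := isConnected_range hf
    rw [hsurj.range_eq] at h1
    haveI : PreconnectedSpace X := ⟨h1.isPreconnected⟩
    exact ⟨⟨h1.nonempty.choose⟩⟩
  have hq : Topology.IsQuotientMap f := hf.isClosedMap.isQuotientMap hf hsurj
  haveI := locallyConnected_of_isQuotientMap hq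
  haveI := secondCountable_image_aux hf hsurj
  exact ⟨inferInstance, inferInstance, inferInstance, inferInstance, inferInstance⟩

/-- A Peano space: a nonempty compact, connected, locally connected, metrizable
topological space. -/
def IsPeanoSpace (X : Type*) [TopologicalSpace X] : Prop :=
  Nonempty X ∧ CompactSpace X ∧ ConnectedSpace X ∧ LocallyConnectedSpace X ∧
    TopologicalSpace.MetrizableSpace X

/-- A σ-Peano space: an increasing sequence of subsets, each a Peano space with the
subspace topology, whose union is the whole space. -/
def IsSigmaPeano (X : Type*) [TopologicalSpace X] : Prop :=
  ∃ K : ℕ → Set X, Monotone K ∧ (∀ n, IsPeanoSpace (K n)) ∧ (⋃ n, K n) = Set.univ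

theorem stmt6 (X : Type*) [TopologicalSpace X] [T2Space X] [Nonempty X] :
    List.TFAE
      [IsSigmaPeano X,
        ∃ f : ℝ → X, Continuous f ∧ ∀ a : X, ¬ Bornology.IsBounded (f ⁻¹' {a}),
        ∃ f : ℝ → X, Continuous f ∧ Function.Surjective f] := by
  tfae_have 1 → 2 := by
    rintro ⟨K, hmono, hpeano, huniv⟩
    exact sigma_to_curve K hmono (fun n => hpeano n) huniv
  tfae_have 2 → 3 := by
    rintro ⟨f, hf, hub⟩
    refine ⟨f, hf, fun a => ?_⟩
    by_contra h
    push_neg at h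
    refine hub a ?_
    have : f ⁻¹' {a} = ∅ := by
      rw [Set.eq_empty_iff_forall_notMem]
      intro t ht
      exact h t (by simpa using ht)
    rw [this]
    exact Bornology.isBounded_empty
  tfae_have 3 → 1 := by
    rintro ⟨f, hf, hsurj⟩
    refine ⟨fun n => f '' Icc (-(n:ℝ)) n, ?_, ?_, ?_⟩
    · intro a b hab
      refine Set.image_mono (Icc_subset_Icc ?_ ?_)
      · exact neg_le_neg (Nat.cast_le.2 hab)
      · exact Nat.cast_le.2 hab
    · intro n
      have hne : (0:ℝ) ∈ Icc (-(n:ℝ)) (n:ℝ) :=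
        ⟨neg_nonpos.2 (Nat.cast_nonneg n), Nat.cast_nonneg n⟩
      haveI : CompactSpace ↥(Icc (-(n:ℝ)) (n:ℝ)) := isCompact_iff_compactSpace.1 isCompact_Icc
      haveI : ConnectedSpace ↥(Icc (-(n:ℝ)) (n:ℝ)) :=
        Subtype.connectedSpace ⟨⟨0, hne⟩, isPreconnected_Icc⟩
      haveI : LocallyConnectedSpace ↥(Icc (-(n:ℝ)) (n:ℝ)) :=
        ordConnected_locallyConnected Set.ordConnected_Icc
      set F : ↥(Icc (-(n:ℝ)) (n:ℝ)) → ↥(f '' Icc (-(n:ℝ)) (n:ℝ)) :=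
        fun a => ⟨f a, Set.mem_image_of_mem f a.2⟩ with hF
      have hFc : Continuous F := Continuous.subtype_mk (hf.comp continuous_subtype_val) _
      have hFs : Function.Surjective F := by
        rintro ⟨x, t, ht, rfl⟩
        exact ⟨⟨t, ht⟩, rfl⟩
      exact peano_package_image hFc hFs
    · rw [Set.eq_univ_iff_forall]
      intro x
      obtain ⟨t, rfl⟩ := hsurj x
      have habs : |t| ≤ (⌈|t|⌉₊ : ℝ) := Nat.le_ceil _
      obtain ⟨h1, h2⟩ := abs_le.1 habs
      exact mem_iUnion.2 ⟨⌈|t|⌉₊, Set.mem_image_of_mem f ⟨h1, h2⟩⟩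
  tfae_finish
end

section
/- If X is a Hausdorff σ-Peano space, then the set C(ℝ, X) of continuous maps from ℝ to X has cardinality at most 𝔠 (the cardinality of the continuum). -/
theorem aux_mk_le_continuum_of_t0 (Y : Type*) [TopologicalSpace Y] [T0Space Y]
    [SecondCountableTopology Y] : Cardinal.mk Y ≤ Cardinal.continuum := by
  have hB := TopologicalSpace.isBasis_countableBasis Y
  have hc := TopologicalSpace.countable_countableBasis Y
  have hinj : Function.Injective
      (fun x : Y => {s : TopologicalSpace.countableBasis Y | x ∈ s.1}) := by
    intro x y hxy
    simp only [Set.ext_iff, Set.mem_setOf_eq, Subtype.forall] at hxy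
    refine Inseparable.eq (inseparable_iff_forall_isOpen.2 fun s hs => ?_)
    constructor
    · intro hx
      obtain ⟨t, htB, hxt, hts⟩ := hB.exists_subset_of_mem_open hx hs
      exact hts ((hxy t htB).1 hxt)
    · intro hy
      obtain ⟨t, htB, hyt, hts⟩ := hB.exists_subset_of_mem_open hy hs
      exact hts ((hxy t htB).2 hyt)
  calc Cardinal.mk Y ≤ Cardinal.mk (Set (TopologicalSpace.countableBasis Y)) :=
        Cardinal.mk_le_of_injective hinj
    _ = 2 ^ Cardinal.mk (TopologicalSpace.countableBasis Y) := by rw [Cardinal.mk_set]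
    _ ≤ 2 ^ Cardinal.aleph0 :=
        Cardinal.power_le_power_left two_ne_zero (Cardinal.mk_le_aleph0_iff.2 hc.to_subtype)
    _ = Cardinal.continuum := Cardinal.two_power_aleph0

theorem stmt7 (X : Type*) [TopologicalSpace X] [T2Space X] (h : IsSigmaPeano X) :
    Cardinal.mk C(ℝ, X) ≤ Cardinal.continuum := by
  obtain ⟨K, -, hK, hU⟩ := h
  -- Each K n has cardinality at most 𝔠.
  have hKc : ∀ n, Cardinal.mk (K n) ≤ Cardinal.continuum := by
    intro n
    obtain ⟨-, hcomp, -, -, hmet⟩ := hK n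
    haveI := hcomp
    haveI := hmet
    letI := TopologicalSpace.metrizableSpaceMetric (K n)
    exact aux_mk_le_continuum_of_t0 (K n)
  -- Hence X has cardinality at most 𝔠.
  have hX : Cardinal.mk X ≤ Cardinal.continuum := by
    have := Cardinal.mk_iUnion_le_sum_mk_lift (f := K)
    rw [hU, Cardinal.mk_univ] at this
    rw [← Cardinal.lift_le.{0}]
    refine this.trans ?_
    refine (Cardinal.sum_le_sum _ (fun _ => Cardinal.continuum) hKc).trans ?_
    simp only [Cardinal.sum_const, Cardinal.mk_nat, Cardinal.lift_aleph0,
      Cardinal.lift_continuum]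
    rw [Cardinal.aleph0_mul_eq Cardinal.aleph0_le_continuum]
  -- A continuous map from ℝ is determined by its values on ℚ.
  have hinj : Function.Injective (fun f : C(ℝ, X) => fun q : ℚ => f (q : ℝ)) := by
    intro f g hfg
    ext x
    have := Continuous.ext_on Rat.denseRange_cast f.continuous g.continuous
      (fun y hy => by obtain ⟨q, rfl⟩ := hy; exact congrFun hfg q)
    exact congrFun this x
  calc Cardinal.mk C(ℝ, X) ≤ Cardinal.mk (ℚ → X) := Cardinal.mk_le_of_injective hinj
    _ = Cardinal.lift.{_} (Cardinal.mk X) ^ Cardinal.aleph0 := by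
        rw [Cardinal.mk_arrow, Cardinal.mk_denumerable ℚ, Cardinal.lift_aleph0,
          Cardinal.lift_umax.{_, 0}]
    _ ≤ Cardinal.continuum ^ Cardinal.aleph0 := by
        exact Cardinal.power_le_power_right (by simpa using hX)
    _ = Cardinal.continuum := Cardinal.continuum_power_aleph0
end

section
/- For every pair m, n ∈ ℕ with m, n ≥ 1, the set CS_∞(ℝ^m, ℝ^n) is 𝔠-lineable in C(ℝ^m, ℝ^n): there exists a linearly independent family of cardinality 𝔠 (the continuum) in the real vector space C(ℝ^m, ℝ^n) such that every nonzero finite linear combination of its members belongs to CS_∞(ℝ^m, ℝ^n). -/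
noncomputable section
open Metric



def tent (x : ℝ) : ℝ := max 0 (1 - |x|)

lemma tent_continuous : Continuous tent := by unfold tent; fun_prop

lemma tent_nonneg (x : ℝ) : 0 ≤ tent x := le_max_left _ _

lemma tent_le_one (x : ℝ) : tent x ≤ 1 := by
  have := abs_nonneg x
  apply max_le <;> linarith

lemma tent_eq_zero {x : ℝ} (h : 1 ≤ |x|) : tent x = 0 := by
  apply max_eq_left; linarith

def interp (v : ℕ → ℝ) (x : ℝ) : ℝ := ∑' k : ℕ, v k * tent (x - k)

lemma interp_eq_sum (v : ℕ → ℝ) (x : ℝ) (K : Finset ℕ)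
    (hK : ∀ k : ℕ, k ∉ K → tent (x - k) = 0) :
    interp v x = ∑ k ∈ K, v k * tent (x - k) := by
  apply tsum_eq_sum
  intro k hk
  rw [hK k hk, mul_zero]

lemma interp_continuous (v : ℕ → ℝ) : Continuous (interp v) := by
  rw [continuous_iff_continuousAt]
  intro x₀
  set K : Finset ℕ := Finset.range (⌈max 0 x₀⌉₊ + 2) with hKdef
  have hev : Set.EqOn (interp v) (fun x => ∑ k ∈ K, v k * tent (x - k)) (Set.Iio (x₀ + 1)) := by
    intro x hx
    apply interp_eq_sum
    intro k hk
    apply tent_eq_zero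
    have hk2 : ⌈max 0 x₀⌉₊ + 2 ≤ k := by
      by_contra hc
      exact hk (Finset.mem_range.mpr (by omega))
    have : (⌈max 0 x₀⌉₊ + 2 : ℝ) ≤ (k : ℝ) := by exact_mod_cast hk2
    have h1 : x₀ ≤ ⌈max 0 x₀⌉₊ := le_trans (le_max_right 0 x₀) (Nat.le_ceil _)
    have hx' : x < x₀ + 1 := hx
    rw [abs_sub_comm, le_abs]
    left; linarith
  have : ContinuousAt (fun x => ∑ k ∈ K, v k * tent (x - k)) x₀ := by
    apply Continuous.continuousAt
    apply continuous_finset_sum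
    intro k _
    exact continuous_const.mul (tent_continuous.comp (continuous_id.sub continuous_const))
  exact this.congr (Filter.eventuallyEq_of_mem (Iio_mem_nhds (by linarith)) (fun x hx => (hev hx).symm))

/-- value of interp on [k, k+1] -/
lemma interp_value (v : ℕ → ℝ) (k : ℕ) {x : ℝ} (h1 : (k : ℝ) ≤ x) (h2 : x ≤ (k : ℝ) + 1) :
    interp v x = v k * (1 - (x - k)) + v (k + 1) * (x - k) := by
  have hne : k ≠ k + 1 := by omega
  rw [interp_eq_sum v x {k, k + 1}]
  · rw [Finset.sum_insert (by simp [hne]), Finset.sum_singleton]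
    have t1 : tent (x - k) = 1 - (x - k) := by
      unfold tent
      rw [abs_of_nonneg (by linarith)]
      apply max_eq_right; linarith
    have t2 : tent (x - (k + 1 : ℕ)) = x - k := by
      push_cast
      unfold tent
      rw [abs_of_nonpos (by linarith)]
      rw [max_eq_right (by linarith)]
      ring
    rw [t1, t2]
  · intro j hj
    simp only [Finset.mem_insert, Finset.mem_singleton] at hj
    push_neg at hj
    apply tent_eq_zero
    rcases lt_or_gt_of_ne hj.1 with hlt | hgt
    · -- j < k, so j ≤ k - 1, x - j ≥ 1
      have : (j : ℝ) + 1 ≤ (k : ℝ) := by exact_mod_cast (by omega : j + 1 ≤ k)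
      rw [le_abs]; left; linarith
    · -- j > k+1, so j ≥ k+2
      have hj2 : k + 2 ≤ j := by omega
      have : (k : ℝ) + 2 ≤ (j : ℝ) := by exact_mod_cast hj2
      rw [abs_sub_comm, le_abs]; left; linarith

lemma interp_const (v : ℕ → ℝ) (k : ℕ) {x : ℝ} (h1 : (k : ℝ) ≤ x) (h2 : x ≤ (k : ℝ) + 1)
    (hc : v (k + 1) = v k) : interp v x = v k := by
  rw [interp_value v k h1 h2, hc]; ring



def evens : Set ℝ := Set.range (fun k : ℤ => (2 * k : ℝ))

lemma evens_nonempty : evens.Nonempty := ⟨0, 0, by norm_num⟩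

def pb (x : ℝ) : ℝ := max 0 (min 1 (3 * infDist x evens - 1))

lemma pb_continuous : Continuous pb := by
  unfold pb
  have h1 : Continuous fun x : ℝ => infDist x evens := continuous_infDist_pt evens
  fun_prop

lemma pb_nonneg (x : ℝ) : 0 ≤ pb x := le_max_left _ _

lemma pb_le_one (x : ℝ) : pb x ≤ 1 := by
  apply max_le (by norm_num)
  exact le_trans (min_le_left _ _) le_rfl

lemma pb_eq_zero {x : ℝ} (K : ℤ) (h : |x - 2 * K| ≤ 1/3) : pb x = 0 := by
  have hd : infDist x evens ≤ 1/3 := by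
    refine le_trans (infDist_le_dist_of_mem ⟨K, rfl⟩) ?_
    rw [Real.dist_eq]; exact h
  apply max_eq_left
  exact le_trans (min_le_right _ _) (by linarith)

lemma pb_eq_one {x : ℝ} (h : ∀ K : ℤ, 2/3 ≤ |x - 2 * K|) : pb x = 1 := by
  have : Nonempty evens := ⟨⟨0, 0, by norm_num⟩⟩
  have hd : 2/3 ≤ infDist x evens := by
    rw [infDist_eq_iInf]
    apply le_ciInf
    rintro ⟨y, K, rfl⟩
    rw [Real.dist_eq]; exact h K
  unfold pb
  rw [min_eq_left (by linarith)]
  apply max_eq_right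
  norm_num



def bcast (b : Bool) : ℝ := if b then 1 else 0

lemma bcast_nonneg (b : Bool) : 0 ≤ bcast b := by cases b <;> simp [bcast]
lemma bcast_le_one (b : Bool) : bcast b ≤ 1 := by cases b <;> simp [bcast]

lemma summable_bgeom (a : ℕ → Bool) (c : ℝ) (hc : 0 ≤ c) (hc1 : c < 1) :
    Summable (fun k : ℕ => bcast (a k) * c ^ (k + 1)) := by
  apply Summable.of_nonneg_of_le
  · intro k; exact mul_nonneg (bcast_nonneg _) (pow_nonneg hc _)
  · intro k
    calc bcast (a k) * c ^ (k + 1) ≤ 1 * c ^ (k + 1) := by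
          apply mul_le_mul_of_nonneg_right (bcast_le_one _) (pow_nonneg hc _)
      _ = c ^ (k+1) := one_mul _
  · exact (summable_geometric_of_lt_one hc hc1).comp_injective (add_left_injective 1)

/-- digit stream for binary expansion -/
def bdig (x : ℝ) : ℕ → ℝ × Bool
  | 0 => (x, decide (1 ≤ 2 * x))
  | k + 1 =>
    let r := (bdig x k).1
    let r' := if 1 ≤ 2 * r then 2 * r - 1 else 2 * r
    (r', decide (1 ≤ 2 * r'))

lemma binary_expansion {x : ℝ} (h0 : 0 ≤ x) (h1 : x ≤ 1) :
    ∃ a : ℕ → Bool, x = ∑' k : ℕ, bcast (a k) * (2⁻¹ : ℝ) ^ (k + 1) := by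
  classical
  -- remainder sequence
  let r : ℕ → ℝ := fun k => (bdig x k).1
  let a : ℕ → Bool := fun k => decide (1 ≤ 2 * r k)
  have hr0 : r 0 = x := rfl
  have hrs : ∀ k, r (k + 1) = if 1 ≤ 2 * r k then 2 * r k - 1 else 2 * r k := fun k => rfl
  have hbound : ∀ k, 0 ≤ r k ∧ r k ≤ 1 := by
    intro k
    induction k with
    | zero => exact ⟨h0, h1⟩
    | succ k ih =>
      rw [hrs k]
      split_ifs with hc
      · constructor <;> [linarith [ih.1]; linarith [ih.2]]
      · push_neg at hc
        constructor <;> [linarith [ih.1]; linarith [ih.2]]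
  have key : ∀ k : ℕ, x = (∑ i ∈ Finset.range k, bcast (a i) * (2⁻¹ : ℝ) ^ (i + 1))
      + r k * (2⁻¹ : ℝ) ^ k := by
    intro k
    induction k with
    | zero => simp [hr0]
    | succ k ih =>
      rw [Finset.sum_range_succ]
      have ha : bcast (a k) = if 1 ≤ 2 * r k then (1:ℝ) else 0 := by
        simp only [a, bcast, decide_eq_true_eq]
      rw [hrs k] at *
      split_ifs with hc
      · rw [ih]; rw [ha]; simp only [if_pos hc]
        ring
      · rw [ih]; rw [ha]; simp only [if_neg hc]
        ring
  refine ⟨a, ?_⟩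
  have hsum := summable_bgeom a 2⁻¹ (by norm_num) (by norm_num)
  have htend := hsum.hasSum.tendsto_sum_nat
  -- partial sums also tend to x
  have htend2 : Filter.Tendsto (fun k => ∑ i ∈ Finset.range k, bcast (a i) * (2⁻¹ : ℝ) ^ (i + 1))
      Filter.atTop (nhds x) := by
    have heq : ∀ k, ∑ i ∈ Finset.range k, bcast (a i) * (2⁻¹ : ℝ) ^ (i + 1)
        = x - r k * (2⁻¹ : ℝ) ^ k := by
      intro k; have := key k; linarith
    simp only [heq]
    have hz : Filter.Tendsto (fun k : ℕ => r k * (2⁻¹ : ℝ) ^ k) Filter.atTop (nhds 0) := by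
      apply squeeze_zero
      · intro k; exact mul_nonneg (hbound k).1 (by positivity)
      · intro k
        calc r k * (2⁻¹:ℝ)^k ≤ 1 * (2⁻¹:ℝ)^k :=
              mul_le_mul_of_nonneg_right (hbound k).2 (by positivity)
          _ = (2⁻¹:ℝ)^k := one_mul _
      · exact tendsto_pow_atTop_nhds_zero_of_lt_one (by norm_num) (by norm_num)
    have := Filter.Tendsto.sub (tendsto_const_nhds (x := x)) hz
    simpa using this
  exact tendsto_nhds_unique htend2 htend

-- PART 4
def tval (d : ℕ → Bool) : ℝ := ∑' i : ℕ, 2 * (bcast (d i) * (3⁻¹ : ℝ) ^ (i + 1))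

lemma term_nonneg (d : ℕ → Bool) (i : ℕ) : 0 ≤ 2 * (bcast (d i) * (3⁻¹ : ℝ) ^ (i + 1)) :=
  mul_nonneg (by norm_num) (mul_nonneg (bcast_nonneg _) (by positivity))

lemma summable_tval (d : ℕ → Bool) :
    Summable (fun i : ℕ => 2 * (bcast (d i) * (3⁻¹ : ℝ) ^ (i + 1))) :=
  (summable_bgeom d 3⁻¹ (by norm_num) (by norm_num)).mul_left 2

lemma tsum_geom_tail (c : ℝ) (h0 : 0 ≤ c) (h1 : c < 1) (j : ℕ) :
    ∑' l : ℕ, c ^ (l + j) = c ^ j * (1 - c)⁻¹ := by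
  have h : ∀ l : ℕ, c ^ (l + j) = c ^ j * c ^ l := by
    intro l; rw [pow_add]; ring
  simp only [h]
  rw [tsum_mul_left, tsum_geometric_of_lt_one h0 h1]

lemma summable_geom_shift (c : ℝ) (h0 : 0 ≤ c) (h1 : c < 1) (j : ℕ) :
    Summable (fun l : ℕ => c ^ (l + j)) :=
  (summable_geometric_of_lt_one h0 h1).comp_injective (add_left_injective j)

lemma tval_nonneg (d : ℕ → Bool) : 0 ≤ tval d :=
  tsum_nonneg (term_nonneg d)

lemma tval_le_one (d : ℕ → Bool) : tval d ≤ 1 := by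
  have h := Summable.tsum_le_tsum (f := fun i : ℕ => 2 * (bcast (d i) * (3⁻¹:ℝ)^(i+1)))
    (g := fun i : ℕ => 2 * (3⁻¹:ℝ)^(i+1)) ?_ (summable_tval d) ?_
  · refine le_trans h ?_
    have : (fun i : ℕ => 2 * (3⁻¹:ℝ)^(i+1)) = fun i : ℕ => 2 * (3⁻¹:ℝ)^(i+1) := rfl
    rw [tsum_mul_left]
    have := tsum_geom_tail 3⁻¹ (by norm_num : (0:ℝ) ≤ 3⁻¹) (by norm_num) 1
    simp only [pow_one] at this
    have heq : ∑' (l : ℕ), (3⁻¹:ℝ) ^ (l + 1) = 3⁻¹ * (1 - 3⁻¹)⁻¹ := this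
    have heq2 : (fun i : ℕ => (3⁻¹:ℝ)^(i+1)) = (fun l : ℕ => (3⁻¹:ℝ) ^ (l + 1)) := rfl
    rw [heq2, heq]
    norm_num
  · intro i
    have h1 := bcast_le_one (d i)
    have h2 : (0:ℝ) ≤ (3⁻¹:ℝ)^(i+1) := by positivity
    nlinarith [bcast_nonneg (d i)]
  · exact (summable_geom_shift 3⁻¹ (by norm_num) (by norm_num) 1).mul_left 2

lemma pkey (d : ℕ → Bool) (j : ℕ) : pb ((3:ℝ) ^ j * tval d) = bcast (d j) := by
  set f : ℕ → ℝ := fun i => 2 * (bcast (d i) * (3⁻¹ : ℝ) ^ (i + 1)) with hf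
  have hs := summable_tval d
  have hsplit : tval d = (∑ i ∈ Finset.range (j+1), f i) + ∑' l : ℕ, f (l + (j+1)) :=
    (Summable.sum_add_tsum_nat_add (j+1) hs).symm
  set T : ℝ := ∑' l : ℕ, (3:ℝ)^j * f (l + (j+1)) with hT
  have hmul : (3:ℝ) ^ j * tval d
      = (∑ i ∈ Finset.range j, (3:ℝ)^j * f i) + (3:ℝ)^j * f j + T := by
    rw [hsplit, Finset.sum_range_succ, hT]
    rw [mul_add, mul_add, Finset.mul_sum]
    congr 1
    exact (tsum_mul_left).symm
  set N : ℕ := ∑ i ∈ Finset.range j, (if d i then 1 else 0) * 3^(j-1-i) with hN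
  have hfin : ∑ i ∈ Finset.range j, (3:ℝ)^j * f i = 2 * (N : ℝ) := by
    rw [hN]
    push_cast
    rw [Finset.mul_sum]
    apply Finset.sum_congr rfl
    intro i hi
    have hij : i < j := Finset.mem_range.mp hi
    have hpow : (3:ℝ)^j = 3^(j-1-i) * 3^(i+1) := by
      rw [← pow_add]; congr 1; omega
    have h3 : ((3:ℝ)^(i+1)) ≠ 0 := by positivity
    rw [hf]
    simp only
    rw [inv_pow, hpow]
    cases d i <;> simp [bcast] <;> field_simp <;> ring
  have hterm : (3:ℝ)^j * f j = 2 * bcast (d j) * 3⁻¹ := by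
    rw [hf]
    simp only
    rw [inv_pow, pow_succ]
    have h3 : ((3:ℝ)^j) ≠ 0 := by positivity
    field_simp
  have hTnn : 0 ≤ T := by
    rw [hT]
    apply tsum_nonneg
    intro l
    exact mul_nonneg (by positivity) (term_nonneg d _)
  have hTle : T ≤ 1/3 := by
    have hcong : ∀ l : ℕ, (3:ℝ)^j * f (l + (j+1)) = 2 * bcast (d (l+(j+1))) * (3⁻¹:ℝ)^(l+2) := by
      intro l
      rw [hf]
      simp only
      have hpow : (3:ℝ)^j * (3⁻¹:ℝ)^(l+(j+1)+1) = (3⁻¹:ℝ)^(l+2) := by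
        rw [inv_pow, inv_pow]
        have he : (3:ℝ)^(l+(j+1)+1) = 3^(l+2) * 3^j := by rw [← pow_add]; congr 1; omega
        rw [he]
        have h1 : ((3:ℝ)^(l+2)) ≠ 0 := by positivity
        have h2 : ((3:ℝ)^j) ≠ 0 := by positivity
        field_simp
      calc (3:ℝ)^j * (2 * (bcast (d (l+(j+1))) * (3⁻¹:ℝ)^(l+(j+1)+1)))
          = 2 * bcast (d (l+(j+1))) * ((3:ℝ)^j * (3⁻¹:ℝ)^(l+(j+1)+1)) := by ring
        _ = 2 * bcast (d (l+(j+1))) * (3⁻¹:ℝ)^(l+2) := by rw [hpow]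
    rw [hT]
    simp only [hcong]
    have hle := Summable.tsum_le_tsum (L := SummationFilter.unconditional ℕ) (f := fun l : ℕ => 2 * bcast (d (l+(j+1))) * (3⁻¹:ℝ)^(l+2))
      (g := fun l : ℕ => 2 * (3⁻¹:ℝ)^(l+2)) ?_ ?_ ?_
    · refine le_trans hle ?_
      rw [tsum_mul_left]
      have heq : ∑' (l : ℕ), (3⁻¹:ℝ) ^ (l + 2) = 3⁻¹^2 * (1 - 3⁻¹)⁻¹ :=
        tsum_geom_tail 3⁻¹ (by norm_num) (by norm_num) 2
      rw [heq]
      norm_num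
    · intro l
      have h1 := bcast_le_one (d (l+(j+1)))
      have h2 : (0:ℝ) ≤ (3⁻¹:ℝ)^(l+2) := by positivity
      nlinarith [bcast_nonneg (d (l+(j+1)))]
    · -- summable lhs
      apply Summable.of_nonneg_of_le (fun l => ?_) (fun l => ?_)
        ((summable_geom_shift 3⁻¹ (by norm_num) (by norm_num) 2).mul_left 2)
      · exact mul_nonneg (mul_nonneg (by norm_num) (bcast_nonneg _)) (by positivity)
      · have h1 := bcast_le_one (d (l+(j+1)))
        have h2 : (0:ℝ) ≤ (3⁻¹:ℝ)^(l+2) := by positivity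
        nlinarith [bcast_nonneg (d (l+(j+1)))]
    · exact (summable_geom_shift 3⁻¹ (by norm_num) (by norm_num) 2).mul_left 2
  rw [hmul, hfin, hterm]
  cases hd : d j with
  | false =>
    have hb : bcast false = 0 := rfl
    rw [hb]
    rw [show (2:ℝ) * (N:ℝ) + 2 * 0 * 3⁻¹ + T = 2 * (N:ℝ) + T by ring]
    apply pb_eq_zero (N : ℤ)
    rw [show ((2:ℝ) * (N:ℝ) + T - 2 * ((N:ℤ):ℝ)) = T by push_cast; ring]
    rw [abs_of_nonneg hTnn]
    exact hTle
  | true =>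
    have hb : bcast true = 1 := rfl
    rw [hb]
    apply pb_eq_one
    intro K
    have hval : (2:ℝ) * (N:ℝ) + 2 * 1 * 3⁻¹ + T - 2 * K = 2 * (((N:ℤ) - K : ℤ) : ℝ) + 2/3 + T := by
      push_cast; ring
    rw [hval]
    set M : ℤ := (N:ℤ) - K with hM
    rcases le_or_gt 0 M with hMn | hMn
    · have : (0:ℝ) ≤ (M:ℝ) := by exact_mod_cast hMn
      rw [le_abs]; left; linarith
    · have hM1 : M ≤ -1 := by omega
      have : (M:ℝ) ≤ -1 := by exact_mod_cast hM1
      rw [le_abs]; right; linarith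

-- PART 5 : the two Schoenberg coordinate functions
def xx (t : ℝ) : ℝ := ∑' k : ℕ, pb ((3:ℝ)^(2*k) * t) * (2⁻¹:ℝ)^(k+1)
def yy (t : ℝ) : ℝ := ∑' k : ℕ, pb ((3:ℝ)^(2*k+1) * t) * (2⁻¹:ℝ)^(k+1)

lemma xxyy_continuous : Continuous xx ∧ Continuous yy := by
  constructor <;>
  · apply continuous_tsum
      (u := fun k : ℕ => (2⁻¹:ℝ)^(k+1))
    · intro k
      exact (pb_continuous.comp (continuous_const.mul continuous_id)).mul continuous_const
    · exact (summable_geometric_of_lt_one (by norm_num) (by norm_num)).comp_injective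
        (add_left_injective 1)
    · intro k x
      rw [Real.norm_eq_abs, abs_of_nonneg (mul_nonneg (pb_nonneg _) (by positivity))]
      calc pb _ * (2⁻¹:ℝ)^(k+1) ≤ 1 * (2⁻¹:ℝ)^(k+1) :=
            mul_le_mul_of_nonneg_right (pb_le_one _) (by positivity)
        _ = (2⁻¹:ℝ)^(k+1) := one_mul _

lemma s2cover {x y : ℝ} (hx0 : 0 ≤ x) (hx1 : x ≤ 1) (hy0 : 0 ≤ y) (hy1 : y ≤ 1) :
    ∃ t : ℝ, 0 ≤ t ∧ t ≤ 1 ∧ xx t = x ∧ yy t = y := by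
  obtain ⟨a, ha⟩ := binary_expansion hx0 hx1
  obtain ⟨b, hb⟩ := binary_expansion hy0 hy1
  set d : ℕ → Bool := fun i => if i % 2 = 0 then a (i / 2) else b (i / 2) with hd
  refine ⟨tval d, tval_nonneg d, tval_le_one d, ?_, ?_⟩
  · rw [xx, ha]
    apply tsum_congr
    intro k
    rw [pkey d (2*k)]
    congr 1
    rw [hd]
    simp [Nat.mul_mod_right]
  · rw [yy, hb]
    apply tsum_congr
    intro k
    rw [pkey d (2*k+1)]
    congr 1
    rw [hd]
    have h1 : (2*k+1) % 2 = 1 := by omega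
    have h2 : (2*k+1)/2 = k := by omega
    simp [h1, h2]
-- PART 6 : the n-dimensional curve
def Scurve : (n : ℕ) → ℝ → (Fin n → ℝ)
  | 0, _ => Fin.elim0
  | n+1, t => Fin.cons (xx t) (Scurve n (yy t))

lemma Scurve_continuous (n : ℕ) : Continuous (Scurve n) := by
  induction n with
  | zero => exact continuous_pi (fun i => i.elim0)
  | succ n ih =>
    apply continuous_pi
    intro i
    induction i using Fin.cases with
    | zero =>
      have : (fun t => Scurve (n+1) t 0) = xx := by
        funext t; simp [Scurve]
      rw [this]; exact xxyy_continuous.1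
    | succ i =>
      have : (fun t => Scurve (n+1) t i.succ) = fun t => Scurve n (yy t) i := by
        funext t; simp [Scurve]
      rw [this]
      exact (continuous_apply i).comp (ih.comp xxyy_continuous.2)

lemma Scurve_cover (n : ℕ) (v : Fin n → ℝ) (hv : ∀ j, 0 ≤ v j ∧ v j ≤ 1) :
    ∃ u : ℝ, 0 ≤ u ∧ u ≤ 1 ∧ Scurve n u = v := by
  induction n with
  | zero => exact ⟨0, le_rfl, zero_le_one, funext (fun i => i.elim0)⟩
  | succ n ih =>
    obtain ⟨u', hu'0, hu'1, hu'⟩ := ih (Fin.tail v) (fun j => hv j.succ)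
    obtain ⟨t, ht0, ht1, hxx, hyy⟩ := s2cover (hv 0).1 (hv 0).2 hu'0 hu'1
    refine ⟨t, ht0, ht1, ?_⟩
    show Fin.cons (xx t) (Scurve n (yy t)) = v
    rw [hxx, hyy, hu', Fin.cons_self_tail]

-- PART 7 : schedules
def qenum (i : ℕ) : ℝ := (((Denumerable.eqv ℚ).symm i : ℚ) : ℝ)

lemma qenum_surj (r : ℚ) : qenum (Denumerable.eqv ℚ r) = (r : ℝ) := by
  unfold qenum
  rw [Equiv.symm_apply_apply]

def pseq (k : ℕ) : ℝ := qenum (Nat.unpair k).1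

lemma pseq_pair (i j : ℕ) : pseq (Nat.pair i j) = qenum i := by
  unfold pseq
  rw [Nat.unpair_pair]

def va (k : ℕ) : ℝ := pseq (k / 8)
def vM (k : ℕ) : ℝ := if 1 ≤ k % 8 ∧ k % 8 ≤ 5 then ((k / 8 : ℕ) : ℝ) else 0
def vT (k : ℕ) : ℝ := if k % 8 = 2 ∨ k % 8 = 3 then 1 else 0

def af (t : ℝ) : ℝ := interp va (8 * t)
def Mf (t : ℝ) : ℝ := interp vM (8 * t)
def Tf (t : ℝ) : ℝ := interp vT (8 * t)

lemma af_continuous : Continuous af := (interp_continuous va).comp (continuous_const.mul continuous_id)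
lemma Mf_continuous : Continuous Mf := (interp_continuous vM).comp (continuous_const.mul continuous_id)
lemma Tf_continuous : Continuous Tf := (interp_continuous vT).comp (continuous_const.mul continuous_id)

lemma block (k : ℕ) {τ₀ : ℝ} (h0 : 0 ≤ τ₀) (h1 : τ₀ ≤ 1) :
    af (((8*k+1 : ℝ) + τ₀)/8) = pseq k ∧ Mf (((8*k+1 : ℝ) + τ₀)/8) = (k : ℝ)
      ∧ Tf (((8*k+1 : ℝ) + τ₀)/8) = τ₀ := by
  set t : ℝ := ((8*k+1 : ℝ) + τ₀)/8 with ht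
  have h8 : 8 * t = ((8*k+1 : ℕ) : ℝ) + τ₀ := by rw [ht]; push_cast; ring
  have hlow : ((8*k+1 : ℕ) : ℝ) ≤ 8 * t := by rw [h8]; linarith
  have hhigh : 8 * t ≤ ((8*k+1 : ℕ) : ℝ) + 1 := by rw [h8]; linarith
  have hdiv1 : (8*k+1) / 8 = k := by omega
  have hdiv2 : (8*k+1+1) / 8 = k := by omega
  have hmod1 : (8*k+1) % 8 = 1 := by omega
  have hmod2 : (8*k+1+1) % 8 = 2 := by omega
  refine ⟨?_, ?_, ?_⟩
  · show interp va (8 * t) = pseq k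
    rw [interp_const va (8*k+1) hlow hhigh]
    · unfold va; rw [hdiv1]
    · unfold va; rw [hdiv1, hdiv2]
  · show interp vM (8 * t) = (k : ℝ)
    rw [interp_const vM (8*k+1) hlow hhigh]
    · unfold vM; rw [hmod1, hdiv1]; norm_num
    · unfold vM; rw [hmod1, hmod2, hdiv1, hdiv2]; norm_num
  · show interp vT (8 * t) = τ₀
    rw [interp_value vT (8*k+1) hlow hhigh]
    have hv1 : vT (8*k+1) = 0 := by unfold vT; rw [hmod1]; norm_num
    have hv2 : vT (8*k+1+1) = 1 := by unfold vT; rw [hmod2]; norm_num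
    rw [hv1, hv2, h8]
    ring

-- the vector parts
def Cc (n : ℕ) : Fin n → ℝ := fun _ => 1/2

def Uf (n : ℕ) (t : ℝ) : Fin n → ℝ := Mf t • (Scurve n (Tf t) - Cc n)

lemma Uf_continuous (n : ℕ) : Continuous (Uf n) := by
  apply Continuous.smul Mf_continuous
  exact ((Scurve_continuous n).comp Tf_continuous).sub continuous_const

lemma main_cover (n : ℕ) (μ : ℝ → ℝ) (hμc : Continuous μ) (u : ℝ) (hu : μ u ≠ 0)
    (b : Fin n → ℝ) (N : ℝ) :
    ∃ t : ℝ, N ≤ t ∧ μ (af t) • Uf n t = b := by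
  -- find a rational where μ is nonzero
  have hopen : IsOpen {z : ℝ | μ z ≠ 0} := isOpen_compl_singleton.preimage hμc
  obtain ⟨r, hr⟩ : ∃ r : ℚ, μ (r : ℝ) ≠ 0 :=
    Rat.denseRange_cast.exists_mem_open hopen ⟨u, hu⟩
  set i : ℕ := Denumerable.eqv ℚ r with hi
  -- choose the block index
  obtain ⟨j0, hj0⟩ := exists_nat_ge (max N (2 * ‖b‖ / |μ (r:ℝ)| + 1))
  set k : ℕ := Nat.pair i (j0 + 1) with hk
  have hkj : j0 + 1 ≤ k := Nat.right_le_pair _ _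
  have hkR : (j0 : ℝ) ≤ (k : ℝ) := by exact_mod_cast le_trans (by omega) hkj
  have hk1 : 1 ≤ k := le_trans (by omega) hkj
  have hkN : N ≤ (k : ℝ) := le_trans (le_trans (le_max_left _ _) hj0) hkR
  have hμr : 0 < |μ (r:ℝ)| := abs_pos.mpr hr
  have hkb : 2 * ‖b‖ ≤ (k : ℝ) * |μ (r:ℝ)| := by
    have h1 : 2 * ‖b‖ / |μ (r:ℝ)| + 1 ≤ (k:ℝ) := le_trans (le_trans (le_max_right _ _) hj0) hkR
    have h2 : 2 * ‖b‖ / |μ (r:ℝ)| ≤ (k:ℝ) - 1 := by linarith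
    have h3 := mul_le_mul_of_nonneg_right h2 (le_of_lt hμr)
    rw [div_mul_cancel₀] at h3
    · nlinarith [hμr]
    · exact ne_of_gt hμr
  have hpk : pseq k = (r : ℝ) := by rw [hk, pseq_pair, hi, qenum_surj]
  set sc : ℝ := (k : ℝ) * μ (pseq k) with hsc
  have hscr : sc = (k : ℝ) * μ (r:ℝ) := by rw [hsc, hpk]
  have hscne : sc ≠ 0 := by
    rw [hscr]
    exact mul_ne_zero (Nat.cast_ne_zero.mpr (by omega)) hr
  set v : Fin n → ℝ := fun l => 1/2 + b l / sc with hv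
  have hvmem : ∀ l, 0 ≤ v l ∧ v l ≤ 1 := by
    intro l
    have hbl : |b l| ≤ ‖b‖ := by
      have := norm_le_pi_norm b l
      rwa [Real.norm_eq_abs] at this
    have hsabs : |sc| = (k:ℝ) * |μ (r:ℝ)| := by
      rw [hscr, abs_mul, Nat.abs_cast]
    have hk1R : (1:ℝ) ≤ (k:ℝ) := by exact_mod_cast hk1
    have hpos : (0:ℝ) < (k:ℝ) * |μ (r:ℝ)| := mul_pos (by linarith) hμr
    have h2 : |b l / sc| ≤ 1/2 := by
      rw [abs_div, hsabs]
      rw [div_le_iff₀ hpos]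
      nlinarith
    have := abs_le.mp h2
    constructor <;> [skip; skip] <;> simp only [hv] <;> linarith [this.1, this.2]
  obtain ⟨u₀, hu₀0, hu₀1, hSc⟩ := Scurve_cover n v hvmem
  obtain ⟨haf, hMf, hTf⟩ := block k hu₀0 hu₀1
  set t : ℝ := ((8*k+1 : ℝ) + u₀)/8 with htd
  refine ⟨t, ?_, ?_⟩
  · have : (k : ℝ) ≤ t := by rw [htd]; linarith
    linarith
  · rw [Uf, haf, hMf, hTf, hSc, hpk]
    funext l
    simp only [Pi.smul_apply, Pi.sub_apply, smul_eq_mul, hv, Cc]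
    field_simp
    rw [hscr]
    ring

-- PART 8 : linear independence of exponentials
lemma exp_finset_zero (s : Finset ℝ) (w : ℝ → ℝ)
    (h : ∀ t : ℝ, ∑ c ∈ s, w c * Real.exp (c * t) = 0) : ∀ c ∈ s, w c = 0 := by
  classical
  have hli := linearIndependent_monoidHom (Multiplicative ℝ) ℝ
  set φ : ℝ → (Multiplicative ℝ →* ℝ) := fun c =>
    { toFun := fun t => Real.exp (c * Multiplicative.toAdd t)
      map_one' := by simp
      map_mul' := by intro a b; simp [mul_add, Real.exp_add] } with hφ
  have hinj : Function.Injective φ := by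
    intro c c' hcc
    have h1 := DFunLike.congr_fun hcc (Multiplicative.ofAdd (1:ℝ))
    simp only [hφ, MonoidHom.coe_mk, OneHom.coe_mk, toAdd_ofAdd, mul_one] at h1
    exact Real.exp_injective h1
  have hli2 := hli.comp φ hinj
  rw [linearIndependent_iff'] at hli2
  apply hli2 s w
  funext t
  have ht := h (Multiplicative.toAdd t)
  simp only [Finset.sum_apply, Pi.smul_apply, smul_eq_mul]
  simpa [hφ] using ht

end

theorem stmt9 (m n : ℕ) (hm : 1 ≤ m) (hn : 1 ≤ n) :
    ∃ (ι : Type) (F : ι → C(EuclideanSpace ℝ (Fin m), EuclideanSpace ℝ (Fin n))),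
      Cardinal.mk ι = Cardinal.continuum ∧
      LinearIndependent ℝ F ∧
      ∀ g ∈ Submodule.span ℝ (Set.range F), g ≠ 0 →
        CSInf m (EuclideanSpace ℝ (Fin n)) ⇑g := by
  classical
  set i0 : Fin m := ⟨0, hm⟩ with hi0
  set L : (Fin n → ℝ) ≃L[ℝ] EuclideanSpace ℝ (Fin n) := (EuclideanSpace.equiv (Fin n) ℝ).symm
    with hL
  have hproj : Continuous (fun x : EuclideanSpace ℝ (Fin m) => x i0) := by
    exact (EuclideanSpace.proj (𝕜 := ℝ) i0).continuous
  have hGc : ∀ c : ℝ, Continuous (fun x : EuclideanSpace ℝ (Fin m) =>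
      L (Real.exp (c * af (x i0)) • Uf n (x i0))) := by
    intro c
    apply L.continuous.comp
    refine Continuous.smul (f := fun x : EuclideanSpace ℝ (Fin m) => Real.exp (c * af (x i0))) (g := fun x : EuclideanSpace ℝ (Fin m) => Uf n (x i0)) ?_ ?_
    · exact Real.continuous_exp.comp ((continuous_const.mul af_continuous).comp hproj)
    · exact (Uf_continuous n).comp hproj
  set F : ℝ → C(EuclideanSpace ℝ (Fin m), EuclideanSpace ℝ (Fin n)) :=
    fun c => ⟨_, hGc c⟩ with hF
  -- evaluation of a finite combination
  have heval : ∀ (s : Finset ℝ) (w : ℝ → ℝ) (x : EuclideanSpace ℝ (Fin m)),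
      (∑ c ∈ s, w c • F c) x
        = L ((∑ c ∈ s, w c * Real.exp (c * af (x i0))) • Uf n (x i0)) := by
    intro s w x
    rw [ContinuousMap.coe_sum, Finset.sum_apply, Finset.sum_smul, map_sum]
    apply Finset.sum_congr rfl
    intro c _
    rw [ContinuousMap.coe_smul, Pi.smul_apply]
    show w c • L (Real.exp (c * af (x i0)) • Uf n (x i0)) = _
    rw [← map_smul, smul_smul]
  -- a point where the plateau value is taken and U ≠ 0
  have hU_ne : ∀ k : ℕ, 1 ≤ k → ∃ t : ℝ, af t = pseq k ∧ Uf n t ≠ 0 := by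
    intro k hk
    obtain ⟨u₀, hu0, hu1, hS⟩ := Scurve_cover n (fun _ => 0) (fun _ => ⟨le_rfl, zero_le_one⟩)
    obtain ⟨haf, hMf, hTf⟩ := block k hu0 hu1
    refine ⟨((8*k+1 : ℝ) + u₀)/8, haf, ?_⟩
    rw [Uf, hMf, hTf, hS]
    intro hzero
    have := congrFun hzero ⟨0, hn⟩
    simp only [Pi.smul_apply, Pi.sub_apply, Pi.zero_apply, smul_eq_mul, Cc] at this
    have hkR : (1:ℝ) ≤ (k:ℝ) := by exact_mod_cast hk
    norm_num at this
    omega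
  -- single point
  have hsingle : ∀ t : ℝ, (EuclideanSpace.single i0 t) i0 = t := by
    intro t
    rw [EuclideanSpace.single_apply, if_pos rfl]
  -- μ vanishing on all plateau values means all coefficients vanish
  have hkey : ∀ (s : Finset ℝ) (w : ℝ → ℝ),
      (∀ x : EuclideanSpace ℝ (Fin m),
        L ((∑ c ∈ s, w c * Real.exp (c * af (x i0))) • Uf n (x i0)) = 0) →
      ∀ c ∈ s, w c = 0 := by
    intro s w hzero
    set μ : ℝ → ℝ := fun z => ∑ c ∈ s, w c * Real.exp (c * z) with hμdef
    have hμc : Continuous μ := by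
      apply continuous_finset_sum
      intro c _
      exact continuous_const.mul (Real.continuous_exp.comp (continuous_const.mul continuous_id))
    have hplateau : ∀ k : ℕ, 1 ≤ k → μ (pseq k) = 0 := by
      intro k hk
      obtain ⟨t, hat, hUt⟩ := hU_ne k hk
      have := hzero (EuclideanSpace.single i0 t)
      rw [hsingle t, hat] at this
      have h2 : μ (pseq k) • Uf n t = 0 := by
        apply L.injective
        rw [map_zero]
        exact this
      rcases smul_eq_zero.mp h2 with h | h
      · exact h
      · exact absurd h hUt
    have hrat : ∀ r : ℚ, μ (r : ℝ) = 0 := by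
      intro r
      have h1 : (1:ℕ) ≤ Nat.pair (Denumerable.eqv ℚ r) 1 := Nat.right_le_pair _ _
      have := hplateau _ h1
      rwa [pseq_pair, qenum_surj] at this
    have hμ0 : μ = fun _ => 0 := by
      apply Rat.denseRange_cast.equalizer hμc continuous_const
      funext r
      exact hrat r
    intro c hc
    apply exp_finset_zero s w _ c hc
    intro t
    exact congrFun hμ0 t
  refine ⟨ℝ, F, Cardinal.mk_real, ?_, ?_⟩
  · rw [linearIndependent_iff']
    intro s w hsum c hc
    apply hkey s w _ c hc
    intro x
    rw [← heval s w x, hsum]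
    rfl
  · intro g hg hgne
    rw [Finsupp.mem_span_range_iff_exists_finsupp] at hg
    obtain ⟨l, hl⟩ := hg
    set s : Finset ℝ := l.support with hs
    set μ : ℝ → ℝ := fun z => ∑ c ∈ s, l c * Real.exp (c * z) with hμdef
    have hμc : Continuous μ := by
      apply continuous_finset_sum
      intro c _
      exact continuous_const.mul (Real.continuous_exp.comp (continuous_const.mul continuous_id))
    have hgx : ∀ x : EuclideanSpace ℝ (Fin m),
        g x = L (μ (af (x i0)) • Uf n (x i0)) := by
      intro x
      rw [← hl]
      rw [Finsupp.sum]
      exact heval s l x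
    -- μ is somewhere nonzero
    have hune : ∃ u : ℝ, μ u ≠ 0 := by
      by_contra hc
      push_neg at hc
      apply hgne
      ext x
      rw [hgx x, hc, zero_smul, map_zero]
      rfl
    obtain ⟨u, hu⟩ := hune
    constructor
    · exact g.continuous
    · intro a hbdd
      rw [isBounded_iff_forall_norm_le] at hbdd
      obtain ⟨C, hC⟩ := hbdd
      obtain ⟨t, htC, hteq⟩ := main_cover n μ hμc u hu (L.symm a) (max C 0 + 1)
      have hxmem : EuclideanSpace.single i0 t ∈ (⇑g) ⁻¹' {a} := by
        simp only [Set.mem_preimage, Set.mem_singleton_iff]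
        rw [hgx, hsingle t, hteq]
        exact L.apply_symm_apply a
      have hnorm := hC _ hxmem
      rw [EuclideanSpace.norm_single] at hnorm
      have : t ≤ |t| := le_abs_self t
      rw [Real.norm_eq_abs] at hnorm
      have hCm : C ≤ max C 0 := le_max_left _ _
      linarith
end

section
/- Let X be a Hausdorff topological vector space over ℝ whose topology is induced by a complete metric (an F-space) and which is infinite-dimensional as a real vector space. Then X is not σ-compact, i.e., X cannot be written as a countable union of compact subsets. -/
open Set Filter Topology Pointwise

/-- Riesz: a TVS over ℝ with a compact neighborhood of 0 is finite dimensional. -/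
theorem riesz_aux (X : Type*) [AddCommGroup X] [Module ℝ X] [TopologicalSpace X]
    [IsTopologicalAddGroup X] [ContinuousSMul ℝ X] [T2Space X]
    {K : Set X} (hK : IsCompact K) (h0 : K ∈ 𝓝 (0 : X)) : Module.Finite ℝ X := by
  have h0i : (0 : X) ∈ interior K := mem_interior_iff_mem_nhds.2 h0
  have h2 : (0 : X) ∈ interior ((2⁻¹ : ℝ) • K) := by
    rw [interior_smul₀ (by norm_num : (2⁻¹ : ℝ) ≠ 0)]
    exact ⟨0, h0i, smul_zero _⟩
  -- finite subcover
  obtain ⟨t, -, htK⟩ := hK.elim_nhds_subcover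
      (fun y => (fun z => y + z) '' interior ((2⁻¹ : ℝ) • K))
      (fun x _ => by
        have : IsOpen ((fun z => x + z) '' interior ((2⁻¹ : ℝ) • K)) :=
          (Homeomorph.addLeft x).isOpenMap _ isOpen_interior
        exact this.mem_nhds ⟨0, h2, add_zero x⟩)
  set S : Submodule ℝ X := Submodule.span ℝ (t : Set X) with hS
  haveI : FiniteDimensional ℝ S := FiniteDimensional.span_finset ℝ t
  have key : ∀ n : ℕ, ∀ x ∈ K, ∃ s ∈ S, ∃ k ∈ K, x = s + ((2 : ℝ)⁻¹) ^ n • k := by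
    intro n
    induction n with
    | zero => exact fun x hx => ⟨0, S.zero_mem, x, hx, by simp⟩
    | succ n ih =>
      intro x hx
      obtain ⟨s, hs, k, hk, rfl⟩ := ih x hx
      have hkmem := htK hk
      simp only [mem_iUnion, exists_prop] at hkmem
      obtain ⟨f, hf, z, hz, hzk⟩ := hkmem
      obtain ⟨k', hk', rfl⟩ := interior_subset hz
      refine ⟨s + ((2 : ℝ)⁻¹) ^ n • f, S.add_mem hs (S.smul_mem _ (Submodule.subset_span hf)),
        k', hk', ?_⟩
      rw [← hzk]
      rw [smul_add, smul_smul, ← pow_succ, add_assoc]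
  -- boundedness of K
  have hbdd : Bornology.IsVonNBounded ℝ K := by
    letI : UniformSpace X := IsTopologicalAddGroup.rightUniformSpace X
    haveI : IsUniformAddGroup X := isUniformAddGroup_of_addCommGroup
    exact hK.totallyBounded.isVonNBounded ℝ
  -- every point of K is in S
  have hKS : K ⊆ (S : Set X) := by
    intro x hx
    have hcl : x ∈ closure (S : Set X) := by
      rw [mem_closure_iff_nhds]
      intro N hN
      have hV : (fun v => x + v) ⁻¹' N ∈ 𝓝 (0 : X) := by
        have h' : Continuous fun v : X => x + v := continuous_const.add continuous_id
        exact h'.continuousAt (x := (0 : X)) (by simpa using hN)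
      have hVneg : -((fun v => x + v) ⁻¹' N) ∈ 𝓝 (0 : X) := by
        exact neg_mem_nhds_zero X hV
      obtain ⟨r, hr⟩ := absorbs_iff_norm.1 (hbdd hVneg)
      obtain ⟨n, hn⟩ := pow_unbounded_of_one_lt r (by norm_num : (1 : ℝ) < 2)
      have hsub : K ⊆ (2 : ℝ) ^ n • (-((fun v => x + v) ⁻¹' N)) :=
        hr ((2 : ℝ) ^ n) (by rw [Real.norm_eq_abs, abs_of_pos (by positivity)]; exact hn.le)
      obtain ⟨s, hs, k, hk, hxe⟩ := key n x hx
      obtain ⟨v, hv, hvk⟩ := hsub hk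
      have h2n : ((2 : ℝ)⁻¹) ^ n • k = v := by
        rw [← hvk, smul_smul, ← mul_pow, inv_mul_cancel₀ (by norm_num : (2:ℝ) ≠ 0), one_pow,
          one_smul]
      refine ⟨s, ?_, hs⟩
      have : x + -(((2 : ℝ)⁻¹) ^ n • k) = s := by rw [hxe]; abel
      have hvN : -(((2 : ℝ)⁻¹) ^ n • k) ∈ (fun v => x + v) ⁻¹' N := by
        rw [h2n]; simpa using hv
      rw [← this]
      simpa using hvN
    rwa [S.closed_of_finiteDimensional.closure_eq] at hcl
  -- S = ⊤
  have htop : S = ⊤ := by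
    rw [eq_top_iff]
    intro y _
    have hts : Filter.Tendsto (fun ty : ℝ => ty • y) (𝓝 0) (𝓝 (0 : X)) := by
      have : Continuous fun ty : ℝ => ty • y := continuous_id.smul continuous_const
      have h'' := this.continuousAt (x := (0 : ℝ))
      rw [ContinuousAt, zero_smul] at h''
      exact h''
    have hev : ∀ᶠ ty : ℝ in 𝓝[≠] 0, ty • y ∈ K ∧ ty ≠ 0 :=
      ((hts.eventually_mem h0).filter_mono nhdsWithin_le_nhds).and self_mem_nhdsWithin
    obtain ⟨c, hcK, hc0⟩ := hev.exists
    have := hKS hcK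
    have hy : y = c⁻¹ • (c • y) := by rw [smul_smul, inv_mul_cancel₀ hc0, one_smul]
    rw [hy]
    exact S.smul_mem _ this
  exact ⟨⟨t, by rw [← hS, htop]⟩⟩



theorem stmt13 (X : Type*) [AddCommGroup X] [Module ℝ X] [tX : TopologicalSpace X]
    [IsTopologicalAddGroup X] [ContinuousSMul ℝ X] [T2Space X]
    (hmetric : ∃ mX : MetricSpace X,
      mX.toUniformSpace.toTopologicalSpace = tX ∧ @CompleteSpace X mX.toUniformSpace)
    (hinf : ¬ Module.Finite ℝ X) :
    ¬ ∃ K : ℕ → Set X, (∀ n, IsCompact (K n)) ∧ (⋃ n, K n) = Set.univ := by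
  obtain ⟨mX, rfl, hcc⟩ := hmetric
  rintro ⟨K, hKc, hKu⟩
  haveI : Nonempty X := ⟨0⟩
  haveI : BaireSpace X := by
    letI := mX
    haveI := hcc
    infer_instance
  obtain ⟨n, x, hx⟩ := nonempty_interior_of_iUnion_of_closed
    (fun n => (hKc n).isClosed) hKu
  set K' : Set X := (fun y => -x + y) '' K n with hK'
  have hK'c : IsCompact K' := (hKc n).image (continuous_const.add continuous_id)
  have h0 : K' ∈ 𝓝 (0 : X) := by
    have hop : IsOpen ((fun y => -x + y) '' interior (K n)) :=
      (Homeomorph.addLeft (-x)).isOpenMap _ isOpen_interior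
    have hsub : (fun y => -x + y) '' interior (K n) ⊆ K' :=
      Set.image_mono interior_subset
    exact Filter.mem_of_superset
      (hop.mem_nhds ⟨x, hx, by simp⟩) hsub
  exact hinf (riesz_aux X hK'c h0)
end

section
/- Let c₀₀ denote the space of eventually null real sequences endowed with the supremum norm, and let m ∈ ℕ, m ≥ 1. Then CS_∞(ℝ^m, c₀₀) is 𝔠-lineable in C(ℝ^m, c₀₀): there exists a linearly independent family of cardinality 𝔠 (the continuum) in the real vector space C(ℝ^m, c₀₀) such that every nonzero finite linear combination of its members belongs to CS_∞(ℝ^m, c₀₀). -/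
open scoped ENNReal

/-- `c₀₀`: the subspace of `ℓ^∞` consisting of eventually null real sequences,
endowed (as a submodule of `ℓ^∞`) with the supremum norm. -/
noncomputable def c00 : Submodule ℝ (lp (fun _ : ℕ => ℝ) ∞) where
  carrier := {x | ∃ N : ℕ, ∀ n ≥ N, (x : ℕ → ℝ) n = 0}
  add_mem' := by
    rintro x y ⟨N, hN⟩ ⟨M, hM⟩
    refine ⟨max N M, fun n hn => ?_⟩
    have hx := hN n (le_trans (le_max_left _ _) hn)
    have hy := hM n (le_trans (le_max_right _ _) hn)
    simp [lp.coeFn_add, hx, hy]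
  zero_mem' := ⟨0, fun n _ => by simp⟩
  smul_mem' := by
    rintro c x ⟨N, hN⟩
    refine ⟨N, fun n hn => ?_⟩
    simp [lp.coeFn_smul, hN n hn]

noncomputable section
open Real Metric Set Filter

namespace Stmt14Aux

def pfn (u : ℝ) : ℝ := min 1 (max 0 (3 * Metric.infDist u (Set.range fun M : ℤ => 2*(M:ℝ)) - 1))

lemma pfn_continuous : Continuous pfn := by
  unfold pfn
  exact continuous_const.min (continuous_const.max
      ((continuous_const.mul (Metric.continuous_infDist_pt _)).sub continuous_const))

lemma dist_lower (M K : ℤ) (v : ℝ) (h0 : 0 ≤ v) (h1 : v ≤ 1) :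
    v ≤ dist (2*(M:ℝ)+v) (2*(K:ℝ)) := by
  rw [Real.dist_eq]
  rcases eq_or_ne K M with rfl | hKM
  · simp [abs_of_nonneg h0]
  · have h2 : (1:ℝ) ≤ |(M:ℝ) - (K:ℝ)| := by
      have : ((1:ℤ):ℝ) ≤ |((M - K : ℤ) : ℝ)| := by
        rw [← Int.cast_abs]
        exact_mod_cast Int.one_le_abs (sub_ne_zero.mpr (fun h => hKM h.symm))
      simpa using this
    have he : |2*(M:ℝ) + v - 2*(K:ℝ)| = |2*((M:ℝ)-(K:ℝ)) + v| := by ring_nf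
    rw [he]
    have hb : 2*|(M:ℝ)-(K:ℝ)| - |v| ≤ |2*((M:ℝ)-(K:ℝ)) + v| := by
      have h3 := abs_add_le (2*((M:ℝ)-(K:ℝ)) + v) (-v)
      simp only [add_neg_cancel_right, abs_neg] at h3
      have h2' : |2*((M:ℝ)-(K:ℝ))| = 2*|(M:ℝ)-(K:ℝ)| := by
        rw [abs_mul]; norm_num
      linarith
    have : v ≤ 2*|(M:ℝ)-(K:ℝ)| - |v| := by
      rw [abs_of_nonneg h0]; linarith
    linarith

lemma infDist2Z (M : ℤ) (v : ℝ) (h0 : 0 ≤ v) (h1 : v ≤ 1) :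
    Metric.infDist (2*(M:ℝ)+v) (Set.range fun M : ℤ => 2*(M:ℝ)) = v := by
  apply le_antisymm
  · calc Metric.infDist (2*(M:ℝ)+v) _ ≤ dist (2*(M:ℝ)+v) (2*(M:ℝ)) :=
        Metric.infDist_le_dist_of_mem (Set.mem_range.2 ⟨M, rfl⟩)
    _ = v := by rw [Real.dist_eq]; simp [abs_of_nonneg h0]

  · by_contra hlt
    push_neg at hlt
    obtain ⟨y, ⟨K, rfl⟩, hy⟩ := (Metric.infDist_lt_iff ⟨2*(M:ℝ), Set.mem_range.2 ⟨M, rfl⟩⟩).1 hlt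
    exact absurd hy (not_lt.2 (dist_lower M K v h0 h1))

lemma pfn_eval0 (N : ℕ) (v : ℝ) (h0 : 0 ≤ v) (h1 : v ≤ 1/3) : pfn (2*(N:ℝ) + v) = 0 := by
  unfold pfn
  rw [show ((2:ℝ)*(N:ℝ)) = 2*(((N:ℤ)):ℝ) by push_cast; ring]
  rw [infDist2Z N v h0 (by linarith)]
  rw [max_eq_left (by linarith : 3*v-1 ≤ 0)]
  simp

lemma pfn_eval1 (N : ℕ) (v : ℝ) (h0 : 2/3 ≤ v) (h1 : v ≤ 1) : pfn (2*(N:ℝ) + v) = 1 := by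
  unfold pfn
  rw [show ((2:ℝ)*(N:ℝ)) = 2*(((N:ℤ)):ℝ) by push_cast; ring]
  rw [infDist2Z N v (by linarith) h1]
  rw [max_eq_right (by linarith : (0:ℝ) ≤ 3*v-1)]
  exact min_eq_left (by linarith)

lemma pfn_nonneg (u : ℝ) : 0 ≤ pfn u := le_min zero_le_one (le_max_left _ _)
lemma pfn_le_one (u : ℝ) : pfn u ≤ 1 := min_le_left _ _

lemma pfn_zero : pfn 0 = 0 := by
  have := pfn_eval0 0 0 le_rfl (by norm_num)
  simpa using this

lemma pfn_pow3 (M : ℕ) : pfn ((3:ℝ)^M) = 1 := by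
  obtain ⟨N, hN⟩ : ∃ N : ℕ, 3^M = 2*N + 1 := by
    have hodd : Odd ((3:ℕ)^M) := Odd.pow (by decide)
    obtain ⟨N, hN⟩ := hodd
    exact ⟨N, by omega⟩
  have h3 : ((3:ℝ))^M = 2*(N:ℝ) + 1 := by exact_mod_cast hN
  rw [h3]
  exact pfn_eval1 N 1 (by norm_num) le_rfl

lemma hasSum_half : HasSum (fun k : ℕ => (1:ℝ)/2^(k+1)) 1 := by
  have h := hasSum_geometric_of_lt_one (by norm_num : (0:ℝ) ≤ 1/2) (by norm_num)
  have h2 := h.mul_left (1/2)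
  have : (fun k : ℕ => (1/2) * (1/2:ℝ)^k) = fun k : ℕ => (1:ℝ)/2^(k+1) := by
    funext k
    rw [pow_succ']
    rw [one_div_pow]
    ring
  rw [this] at h2
  rwa [show (1/2:ℝ) * (1 - 1/2)⁻¹ = 1 by norm_num] at h2

lemma hasSum_third : HasSum (fun m : ℕ => (2:ℝ)/3^(m+1)) 1 := by
  have h := hasSum_geometric_of_lt_one (by norm_num : (0:ℝ) ≤ 1/3) (by norm_num)
  have h2 := h.mul_left (2/3)
  have : (fun k : ℕ => (2/3) * (1/3:ℝ)^k) = fun k : ℕ => (2:ℝ)/3^(k+1) := by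
    funext k
    rw [pow_succ', one_div_pow]
    ring
  rw [this] at h2
  rwa [show (2/3:ℝ) * (1 - 1/3)⁻¹ = 1 by norm_num] at h2

section tEnc
variable (c : ℕ → ℕ)

def tEnc : ℝ := ∑' m, 2*(c m : ℝ)/3^(m+1)

variable {c}

lemma tEnc_term_nonneg (m : ℕ) : 0 ≤ 2*(c m:ℝ)/3^(m+1) := by positivity

lemma tEnc_term_le (hc : ∀ m, c m ≤ 1) (m : ℕ) : 2*(c m:ℝ)/3^(m+1) ≤ 2/3^(m+1) := by
  have : (c m : ℝ) ≤ 1 := by exact_mod_cast hc m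
  have h3 : (0:ℝ) < 3^(m+1) := by positivity
  rw [div_le_div_iff₀ h3 h3]
  nlinarith

lemma tEnc_summable (hc : ∀ m, c m ≤ 1) : Summable (fun m => 2*(c m:ℝ)/3^(m+1)) :=
  Summable.of_nonneg_of_le tEnc_term_nonneg (tEnc_term_le hc) hasSum_third.summable

lemma tEnc_nonneg (hc : ∀ m, c m ≤ 1) : 0 ≤ tEnc c :=
  tsum_nonneg tEnc_term_nonneg

lemma tEnc_le_one (hc : ∀ m, c m ≤ 1) : tEnc c ≤ 1 := by
  rw [← hasSum_third.tsum_eq]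
  exact Summable.tsum_le_tsum (tEnc_term_le hc) (tEnc_summable hc) hasSum_third.summable

lemma tEnc_lt_one (hc : ∀ m, c m ≤ 1) (m₀ : ℕ) (h : c m₀ = 0) : tEnc c < 1 := by
  rw [← hasSum_third.tsum_eq]
  apply Summable.tsum_lt_tsum (i := m₀) (tEnc_term_le hc) _ (tEnc_summable hc) hasSum_third.summable
  simp only [h, Nat.cast_zero, mul_zero, zero_div]
  positivity

def bseq (a : ℝ) : ℕ → ℝ
  | 0 => a
  | (k+1) => 2 * bseq a k - (if 1/2 ≤ bseq a k then 1 else 0)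

lemma binary_digits (a : ℝ) (h0 : 0 ≤ a) (h1 : a ≤ 1) :
    ∃ d : ℕ → ℕ, (∀ k, d k ≤ 1) ∧ HasSum (fun k => (d k:ℝ)/2^(k+1)) a := by
  classical
  -- iterative doubling
  let x : ℕ → ℝ := bseq a
  have hx0 : x 0 = a := rfl
  have hxs : ∀ k, x (k+1) = 2 * x k - (if 1/2 ≤ x k then 1 else 0) := fun k => rfl
  let d : ℕ → ℕ := fun k => if 1/2 ≤ x k then 1 else 0
  have hd1 : ∀ k, d k ≤ 1 := fun k => by simp only [d]; split <;> norm_num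
  have hinv : ∀ k, 0 ≤ x k ∧ x k ≤ 1 := by
    intro k
    induction k with
    | zero => exact ⟨h0, h1⟩
    | succ n ih =>
      rw [hxs]
      by_cases h : 1/2 ≤ x n
      · simp only [if_pos h]
        constructor <;> [linarith [ih.1]; linarith [ih.2]]
      · push_neg at h
        simp only [if_neg (not_le.2 h)]
        constructor <;> [linarith [ih.1]; linarith]
  have hpart : ∀ K, ∑ k ∈ Finset.range K, (d k:ℝ)/2^(k+1) = a - x K / 2^K := by
    intro K
    induction K with
    | zero => simp [hx0]
    | succ n ih =>
      rw [Finset.sum_range_succ, ih, hxs]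
      have hdn : ((d n : ℝ)) = (if 1/2 ≤ x n then (1:ℝ) else 0) := by
        simp only [d]; split <;> norm_num
      rw [hdn]
      split_ifs with h
      · have h2 : (2:ℝ)^(n+1) = 2^n * 2 := pow_succ 2 n
        field_simp
        ring
      · have h2 : (2:ℝ)^(n+1) = 2^n * 2 := pow_succ 2 n
        field_simp
        ring
  refine ⟨d, hd1, ?_⟩
  have hsummable : Summable (fun k => (d k:ℝ)/2^(k+1)) := by
    apply Summable.of_nonneg_of_le (fun k => by positivity)
      (fun k => ?_) hasSum_half.summable
    have : (d k : ℝ) ≤ 1 := by exact_mod_cast hd1 k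
    have h2 : (0:ℝ) < 2^(k+1) := by positivity
    rw [div_le_div_iff₀ h2 h2]
    nlinarith
  rw [hsummable.hasSum_iff_tendsto_nat]
  have : ∀ K, ∑ k ∈ Finset.range K, (d k:ℝ)/2^(k+1) = a - x K / 2^K := hpart
  simp_rw [this]
  have hto : Tendsto (fun K : ℕ => x K / 2^K) atTop (nhds 0) := by
    apply squeeze_zero_norm (fun K => ?_) (tendsto_pow_atTop_nhds_zero_of_lt_one
      (by norm_num : (0:ℝ) ≤ 1/2) (by norm_num : (1/2:ℝ) < 1))
    rw [Real.norm_eq_abs, abs_div]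
    rw [abs_of_nonneg (hinv K).1, abs_of_nonneg (by positivity : (0:ℝ) ≤ 2^K)]
    rw [div_pow, one_pow]
    apply div_le_div_of_nonneg_right (hinv K).2 -- maybe wrong name
    positivity
  simpa using tendsto_const_nhds.sub hto

end tEnc

lemma pfn_tEnc (c : ℕ → ℕ) (hc : ∀ m, c m ≤ 1) (j : ℕ) :
    pfn ((3:ℝ)^j * tEnc c) = (c j : ℝ) := by
  have hsum : Summable (fun m => 2*(c m:ℝ)/3^(m+1)) := tEnc_summable hc
  set g : ℕ → ℝ := fun m => (3:ℝ)^j * (2*(c m:ℝ)/3^(m+1)) with hg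
  have hgsum : Summable g := hsum.mul_left _
  have h1 : (3:ℝ)^j * tEnc c = ∑' m, g m := by
    rw [tEnc, ← tsum_mul_left]
  set N : ℕ := ∑ m ∈ Finset.range j, c m * 3^(j-m-1) with hN
  have hhead : ∑ m ∈ Finset.range j, g m = 2*(N:ℝ) := by
    rw [hN]
    push_cast
    rw [Finset.mul_sum]
    apply Finset.sum_congr rfl
    intro m hm
    have hmj : m < j := Finset.mem_range.1 hm
    have hexp : (3:ℝ)^j / 3^(m+1) = 3^(j-m-1) := by
      rw [div_eq_iff (by positivity), ← pow_add]
      congr 1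
      omega
    have : g m = 2*(c m:ℝ) * ((3:ℝ)^j / 3^(m+1)) := by rw [hg]; ring
    rw [this, hexp]
    ring
  set w : ℕ → ℝ := fun i => 2*(c (i+j):ℝ)/3^(i+1) with hw
  have hwg : ∀ i, g (i+j) = w i := by
    intro i
    have hexp : (3:ℝ)^j / 3^(i+j+1) = 1/3^(i+1) := by
      rw [div_eq_div_iff (by positivity) (by positivity), one_mul, ← pow_add]
      congr 1
      omega
    have h1 : g (i+j) = 2*(c (i+j):ℝ) * ((3:ℝ)^j / 3^(i+j+1)) := by rw [hg]; ring
    rw [h1, hexp, hw]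
    ring
  have hcshift : ∀ m, c (m + j) ≤ 1 := fun m => hc _
  have hwsum : Summable w := by
    have := tEnc_summable (c := fun i => c (i+j)) hcshift
    exact this
  have hsplit : (3:ℝ)^j * tEnc c = 2*(N:ℝ) + ∑' i, w i := by
    rw [h1, ← Summable.sum_add_tsum_nat_add j hgsum, hhead]
    congr 1
    exact tsum_congr hwg
  set v : ℝ := ∑' i, w i with hv
  have hvlow : 2*(c j:ℝ)/3 ≤ v := by
    have h0 : w 0 = 2*(c j:ℝ)/3 := by simp [hw]
    rw [← h0]
    exact Summable.le_tsum hwsum 0 (fun i _ => tEnc_term_nonneg (c := fun i => c (i+j)) i)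
  have hvrest : ∑' i, w (i+1) ≤ 1/3 := by
    have hub : HasSum (fun i : ℕ => (2:ℝ)/3^(i+2)) (1/3) := by
      have h := hasSum_third.mul_left (1/3)
      have he : (fun i : ℕ => (1/3)*((2:ℝ)/3^(i+1))) = fun i : ℕ => (2:ℝ)/3^(i+2) := by
        funext i
        rw [pow_succ]
        ring
      rw [he] at h
      simpa using h
    have hsum2 : Summable (fun i => w (i+1)) := (summable_nat_add_iff 1).2 hwsum
    apply le_of_le_of_eq (Summable.tsum_le_tsum ?_ hsum2 hub.summable) hub.tsum_eq
    intro i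
    have hle : 2*(c (i+1+j):ℝ)/3^(i+2) ≤ 2*1/3^(i+2) := by
      gcongr
      exact_mod_cast hc _
    calc w (i+1) = 2*(c (i+1+j):ℝ)/3^(i+2) := by rw [hw]
      _ ≤ 2/3^(i+2) := by simpa using hle
  have hvhigh : v ≤ 2*(c j:ℝ)/3 + 1/3 := by
    have hsp := Summable.sum_add_tsum_nat_add 1 hwsum
    rw [hv, ← hsp]
    have h0 : ∑ i ∈ Finset.range 1, w i = 2*(c j:ℝ)/3 := by simp [hw]
    rw [h0]
    linarith [hvrest]
  rw [hsplit]
  have hcj := hc j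
  rcases Nat.le_one_iff_eq_zero_or_eq_one.mp hcj with h | h
  · rw [h] at hvlow hvhigh ⊢
    norm_num at hvlow hvhigh ⊢
    exact pfn_eval0 N v hvlow (by linarith)
  · rw [h] at hvlow hvhigh ⊢
    norm_num at hvlow hvhigh ⊢
    exact pfn_eval1 N v (by linarith) (by linarith)

def Sf (n i : ℕ) (t : ℝ) : ℝ := ∑' k : ℕ, pfn ((3:ℝ)^(k*n+i) * t)/2^(k+1)

lemma Sf_continuous (n i : ℕ) : Continuous (Sf n i) := by
  apply continuous_tsum (u := fun k : ℕ => (1:ℝ)/2^(k+1))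
  · intro k
    exact (pfn_continuous.comp (continuous_const.mul continuous_id)).div_const _
  · exact hasSum_half.summable
  · intro k t
    rw [Real.norm_eq_abs, abs_div, abs_of_nonneg (pfn_nonneg _),
      abs_of_nonneg (by positivity : (0:ℝ) ≤ 2^(k+1))]
    gcongr
    exact pfn_le_one _

lemma Sf_zero (n i : ℕ) : Sf n i 0 = 0 := by
  unfold Sf
  simp [pfn_zero]

lemma Sf_one (n i : ℕ) : Sf n i 1 = 1 :=
  calc Sf n i 1 = ∑' k : ℕ, (1:ℝ)/2^(k+1) :=
      tsum_congr (fun k => by rw [mul_one, pfn_pow3])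
    _ = 1 := hasSum_half.tsum_eq

lemma Sf_surj (n : ℕ) (hn : 1 ≤ n) (a : ℕ → ℝ) (ha : ∀ i, i < n → 0 ≤ a i ∧ a i ≤ 1)
    (hex : ∃ i, i < n ∧ a i < 1) :
    ∃ t, 0 ≤ t ∧ t < 1 ∧ ∀ i, i < n → Sf n i t = a i := by
  classical
  have hD : ∀ i : ℕ, ∃ d : ℕ → ℕ, (∀ k, d k ≤ 1) ∧
      ((i < n) → HasSum (fun k => (d k:ℝ)/2^(k+1)) (a i)) := by
    intro i
    by_cases h : i < n
    · obtain ⟨d, hd1, hd2⟩ := binary_digits (a i) (ha i h).1 (ha i h).2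
      exact ⟨d, hd1, fun _ => hd2⟩
    · exact ⟨fun _ => 0, fun _ => Nat.zero_le 1, fun h' => absurd h' h⟩
  choose D hD1 hD2 using hD
  set c : ℕ → ℕ := fun m => D (m % n) (m / n) with hcdef
  have hc : ∀ m, c m ≤ 1 := fun m => hD1 _ _
  have hindex : ∀ k i, i < n → c (k*n+i) = D i k := by
    intro k i hi
    have h1 : k*n+i = i + n*k := by ring
    rw [hcdef]
    simp only [h1]
    rw [Nat.add_mul_mod_self_left, Nat.mod_eq_of_lt hi,
      Nat.add_mul_div_left _ _ (by omega : 0 < n), Nat.div_eq_of_lt hi, Nat.zero_add]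
  refine ⟨tEnc c, tEnc_nonneg hc, ?_, ?_⟩
  · obtain ⟨i₀, hi₀, hlt⟩ := hex
    have hk₀ : ∃ k₀, D i₀ k₀ = 0 := by
      by_contra hall
      push_neg at hall
      have hone : ∀ k, D i₀ k = 1 := fun k => by have := hD1 i₀ k; have := hall k; omega
      have := hD2 i₀ hi₀
      rw [show (fun k => ((D i₀ k:ℝ))/2^(k+1)) = (fun k : ℕ => (1:ℝ)/2^(k+1)) by
        funext k; rw [hone k]; norm_num] at this
      have := this.unique hasSum_half
      linarith
    obtain ⟨k₀, hk₀⟩ := hk₀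
    apply tEnc_lt_one hc (k₀*n + i₀)
    rw [hindex k₀ i₀ hi₀, hk₀]
  · intro i hi
    unfold Sf
    rw [← (hD2 i hi).tsum_eq]
    apply tsum_congr
    intro k
    rw [pfn_tEnc c hc (k*n+i), hindex k i hi]

def cSingle (j : ℕ) (a : ℝ) : c00 :=
  ⟨lp.single ∞ j a, ⟨j+1, fun i hi =>
    lp.single_apply_ne (E := fun _ : ℕ => ℝ) ∞ j a (show i ≠ j by omega)⟩⟩

lemma cSingle_coe (j : ℕ) (a : ℝ) (i : ℕ) :
    ((cSingle j a : lp (fun _ : ℕ => ℝ) ∞) : ℕ → ℝ) i = if i = j then a else 0 := by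
  rcases eq_or_ne i j with rfl | h
  · simp [cSingle, lp.single_apply_self]
  · simp [cSingle, lp.single_apply_ne (E := fun _ : ℕ => ℝ) ∞ j a h, h]

lemma cSingle_zero (j : ℕ) : cSingle j 0 = 0 := by
  apply Subtype.ext
  apply lp.ext
  funext i
  rw [cSingle_coe]
  simp

lemma cSingle_lipschitz (j : ℕ) : LipschitzWith 1 (cSingle j) := by
  apply LipschitzWith.of_dist_le_mul
  intro a b
  simp only [NNReal.coe_one, one_mul]
  have : dist (cSingle j a) (cSingle j b)
      = ‖((cSingle j a : lp (fun _ : ℕ => ℝ) ∞)) - (cSingle j b : lp (fun _ : ℕ => ℝ) ∞)‖ := by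
    rw [dist_eq_norm]; rfl
  rw [this]
  apply lp.norm_le_of_forall_le dist_nonneg
  intro i
  rw [lp.coeFn_sub, Pi.sub_apply, cSingle_coe, cSingle_coe]
  rcases eq_or_ne i j with rfl | h
  · simp [Real.dist_eq, Real.norm_eq_abs]
  · simp [h, dist_nonneg]

def bC (n : ℕ) (s : ℝ) : c00 :=
  ∑ j ∈ Finset.range n, cSingle j ((n:ℝ) * Real.sin (2*π*Sf (n+1) j s))

def bv (n : ℕ) (s : ℝ) : ℝ := (n:ℝ) * Real.sin (2*π*Sf (n+1) n s)

lemma bC_coe (n : ℕ) (s : ℝ) (i : ℕ) :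
    ((bC n s : lp (fun _ : ℕ => ℝ) ∞) : ℕ → ℝ) i
      = if i < n then (n:ℝ) * Real.sin (2*π*Sf (n+1) i s) else 0 := by
  unfold bC
  rw [show ((↑(∑ j ∈ Finset.range n, cSingle j ((n:ℝ) * Real.sin (2*π*Sf (n+1) j s))) :
      lp (fun _ : ℕ => ℝ) ∞))
    = ∑ j ∈ Finset.range n, (cSingle j ((n:ℝ) * Real.sin (2*π*Sf (n+1) j s)) :
      lp (fun _ : ℕ => ℝ) ∞) from by push_cast; rfl]
  rw [lp.coeFn_sum, Finset.sum_apply]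
  rw [show (∑ j ∈ Finset.range n,
      ((cSingle j ((n:ℝ) * Real.sin (2*π*Sf (n+1) j s)) : lp (fun _ : ℕ => ℝ) ∞) : ℕ → ℝ) i)
    = ∑ j ∈ Finset.range n, if i = j then (n:ℝ) * Real.sin (2*π*Sf (n+1) j s) else 0 from
    Finset.sum_congr rfl fun j _ => cSingle_coe j _ i]
  rw [Finset.sum_ite_eq]
  simp [Finset.mem_range]

set_option synthInstance.maxHeartbeats 400000 in
lemma bC_continuous (n : ℕ) : Continuous (bC n) := by
  apply continuous_finset_sum
  intro j _
  exact (cSingle_lipschitz j).continuous.comp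
    (continuous_const.mul ((Real.continuous_sin).comp
      (continuous_const.mul (Sf_continuous (n+1) j))))

lemma bv_continuous (n : ℕ) : Continuous (bv n) :=
  continuous_const.mul ((Real.continuous_sin).comp
    (continuous_const.mul (Sf_continuous (n+1) n)))

lemma bC_zero (n : ℕ) : bC n 0 = 0 := by
  unfold bC
  apply Finset.sum_eq_zero
  intro j _
  rw [Sf_zero, mul_zero, Real.sin_zero, mul_zero, cSingle_zero]

lemma bC_one (n : ℕ) : bC n 1 = 0 := by
  unfold bC
  apply Finset.sum_eq_zero
  intro j _
  rw [Sf_one, mul_one, Real.sin_two_pi, mul_zero, cSingle_zero]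

lemma bv_zero (n : ℕ) : bv n 0 = 0 := by
  unfold bv
  rw [Sf_zero, mul_zero, Real.sin_zero, mul_zero]

lemma bv_one (n : ℕ) : bv n 1 = 0 := by
  unfold bv
  rw [Sf_one, mul_one, Real.sin_two_pi, mul_zero]

def enc (k : ℤ) : ℕ := (Nat.unpair k.toNat).1 + 1

def Phi (x : ℝ) : c00 × ℝ := (bC (enc ⌊x⌋) (x - ⌊x⌋), bv (enc ⌊x⌋) (x - ⌊x⌋))

lemma Phi_int (k : ℤ) : Phi (k : ℝ) = (0, 0) := by
  unfold Phi
  rw [Int.floor_intCast]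
  simp [bC_zero, bv_zero]

lemma Phi_continuous : Continuous Phi := by
  apply LocallyFinite.continuous (f := fun k : ℤ => Icc (k:ℝ) (k+1))
  · intro x
    refine ⟨Ioo (x-1) (x+1), Ioo_mem_nhds (by linarith) (by linarith), ?_⟩
    apply Set.Finite.subset (Set.finite_Icc (⌈x-2⌉) (⌊x+1⌋))
    rintro k ⟨y, ⟨hy1, hy2⟩, hy3, hy4⟩
    constructor
    · rw [Int.ceil_le]; linarith
    · rw [Int.le_floor]; linarith
  · apply Set.eq_univ_of_forall
    intro x
    exact Set.mem_iUnion.2 ⟨⌊x⌋, Int.floor_le x, (Int.lt_floor_add_one x).le⟩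
  · intro k
    exact isClosed_Icc
  · intro k
    apply ContinuousOn.congr (f := fun x => (bC (enc k) (x - (k:ℝ)), bv (enc k) (x - (k:ℝ))))
    · exact (((bC_continuous (enc k)).comp (continuous_id.sub continuous_const)).prodMk
        ((bv_continuous (enc k)).comp (continuous_id.sub continuous_const))).continuousOn
    · intro x hx
      rcases lt_or_eq_of_le hx.2 with hlt | heq
      · have hfl : ⌊x⌋ = k := by
          rw [Int.floor_eq_iff]
          exact ⟨hx.1, by push_cast; linarith⟩
        unfold Phi
        rw [hfl]
      · have hx1 : x = ((k+1 : ℤ) : ℝ) := by push_cast; linarith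
        rw [hx1, Phi_int]
        show (0, 0) = (bC (enc k) (((k+1:ℤ):ℝ) - (k:ℝ)), bv (enc k) (((k+1:ℤ):ℝ) - (k:ℝ)))
        rw [show ((k+1:ℤ):ℝ) - (k:ℝ) = 1 by push_cast; ring, bC_one, bv_one]

lemma Phi_hit (b : c00) (sc R : ℝ) : ∃ r : ℝ, R ≤ r ∧ Phi r = (b, sc) := by
  classical
  obtain ⟨N₀, hN₀⟩ := b.2
  set n : ℕ := max (max N₀ ⌈‖(b : lp (fun _ : ℕ => ℝ) ∞)‖⌉₊) ⌈|sc|⌉₊ + 1 with hn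
  have hn1 : 1 ≤ n := by omega
  have hnpos : (0:ℝ) < n := by exact_mod_cast hn1
  have hN0n : N₀ ≤ n := by omega
  have hsupp : ∀ j, n ≤ j → ((b : lp (fun _ : ℕ => ℝ) ∞) : ℕ → ℝ) j = 0 :=
    fun j hj => hN₀ j (le_trans hN0n hj)
  have hbb : ∀ j, |((b : lp (fun _ : ℕ => ℝ) ∞) : ℕ → ℝ) j| ≤ n := by
    intro j
    have h1 : ‖((b : lp (fun _ : ℕ => ℝ) ∞) : ℕ → ℝ) j‖ ≤ ‖(b : lp (fun _ : ℕ => ℝ) ∞)‖ :=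
      lp.norm_apply_le_norm (E := fun _ : ℕ => ℝ) (p := ∞) ENNReal.top_ne_zero _ j
    rw [Real.norm_eq_abs] at h1
    have h2 : ‖(b : lp (fun _ : ℕ => ℝ) ∞)‖ ≤ (⌈‖(b : lp (fun _ : ℕ => ℝ) ∞)‖⌉₊ : ℝ) :=
      Nat.le_ceil _
    have h3 : (⌈‖(b : lp (fun _ : ℕ => ℝ) ∞)‖⌉₊ : ℝ) ≤ n := by
      have : ⌈‖(b : lp (fun _ : ℕ => ℝ) ∞)‖⌉₊ ≤ n := by omega
      exact_mod_cast this
    linarith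
  have hscb : |sc| ≤ n := by
    have h2 : |sc| ≤ (⌈|sc|⌉₊ : ℝ) := Nat.le_ceil _
    have h3 : (⌈|sc|⌉₊ : ℝ) ≤ n := by exact_mod_cast (by omega : ⌈|sc|⌉₊ ≤ n)
    linarith
  set τ : ℕ → ℝ := fun i => if i < n then ((b : lp (fun _ : ℕ => ℝ) ∞) : ℕ → ℝ) i else sc with hτ
  have hτb : ∀ i, |τ i| ≤ n := by
    intro i
    simp only [hτ]
    split
    · exact hbb i
    · exact hscb
  have hIVT : ∀ i : ℕ, ∃ α, 1/4 ≤ α ∧ α ≤ 3/4 ∧ Real.sin (2*π*α) = τ i / n := by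
    intro i
    have hy1 : -1 ≤ τ i / n := by
      rw [le_div_iff₀ hnpos]
      have := (abs_le.1 (hτb i)).1
      linarith
    have hy2 : τ i / n ≤ 1 := by
      rw [div_le_iff₀ hnpos]
      have := (abs_le.1 (hτb i)).2
      linarith
    have hsub : Set.Icc (Real.sin (2*π*(3/4))) (Real.sin (2*π*(1/4)))
        ⊆ (fun α => Real.sin (2*π*α)) '' Set.Icc (1/4) (3/4) :=
      intermediate_value_Icc' (by norm_num) (Real.continuous_sin.comp
        (continuous_const.mul continuous_id)).continuousOn
    have h34 : Real.sin (2*π*(3/4)) = -1 := by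
      rw [show 2*π*(3/4) = π/2 + π by ring, Real.sin_add_pi, Real.sin_pi_div_two]
    have h14 : Real.sin (2*π*(1/4)) = 1 := by
      rw [show 2*π*(1/4) = π/2 by ring, Real.sin_pi_div_two]
    rw [h34, h14] at hsub
    obtain ⟨α, hα, hαeq⟩ := hsub ⟨hy1, hy2⟩
    exact ⟨α, hα.1, hα.2, hαeq⟩
  choose α hα1 hα2 hα3 using hIVT
  obtain ⟨t, ht0, ht1, htS⟩ := Sf_surj (n+1) (by omega) α
    (fun i _ => ⟨by linarith [hα1 i], by linarith [hα2 i]⟩)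
    ⟨0, by omega, by linarith [hα2 0]⟩
  set J : ℕ := ⌈max R 0⌉₊ with hJ
  set k : ℤ := (Nat.pair (n-1) J : ℤ) with hk
  have hkJ : (J : ℤ) ≤ k := by rw [hk]; exact_mod_cast Nat.right_le_pair (n-1) J
  have henc : enc k = n := by
    unfold enc
    rw [hk, Int.toNat_natCast, Nat.unpair_pair]
    omega
  refine ⟨(k : ℝ) + t, ?_, ?_⟩
  · have h1 : R ≤ (J : ℝ) := le_trans (le_max_left R 0) (Nat.le_ceil _)
    have h2 : (J:ℝ) ≤ (k:ℝ) := by exact_mod_cast hkJ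
    linarith
  · have hfl : ⌊(k:ℝ) + t⌋ = k := by
      rw [Int.floor_eq_iff]
      constructor
      · push_cast; linarith
      · push_cast; linarith
    unfold Phi
    rw [hfl, henc]
    have hsub : ((k:ℝ) + t) - (k:ℝ) = t := by ring
    rw [hsub, Prod.mk.injEq]
    constructor
    · -- bC n t = b
      apply Subtype.ext
      apply lp.ext
      funext i
      rw [bC_coe]
      split
      · next hi =>
        rw [htS i (by omega), hα3 i]
        simp only [hτ, if_pos hi]
        have hne : (n:ℝ) ≠ 0 := ne_of_gt hnpos
        field_simp
      · next hi =>
        exact (hsupp i (by omega)).symm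
    · -- bv n t = sc
      unfold bv
      rw [htS n (by omega), hα3 n]
      simp only [hτ, lt_irrefl, if_false]
      have hne : (n:ℝ) ≠ 0 := ne_of_gt hnpos
      field_simp


def b0 : c00 := cSingle 0 1

lemma b0_coord : ((b0 : lp (fun _ : ℕ => ℝ) ∞) : ℕ → ℝ) 0 = 1 := by
  rw [b0, cSingle_coe]
  simp

end Stmt14Aux

open Stmt14Aux

set_option maxHeartbeats 1000000

theorem stmt14 (m : ℕ) (hm : 1 ≤ m) :
    ∃ (ι : Type) (F : ι → C(EuclideanSpace ℝ (Fin m), c00)),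
      Cardinal.mk ι = Cardinal.continuum ∧
      LinearIndependent ℝ F ∧
      ∀ g ∈ Submodule.span ℝ (Set.range F), g ≠ 0 → CSInf m c00 ⇑g := by
  classical
  set idx : Fin m := ⟨0, hm⟩ with hidx
  have hcoord : Continuous fun x : EuclideanSpace ℝ (Fin m) => x idx := by
    have := (EuclideanSpace.proj (𝕜 := ℝ) idx).continuous
    simpa [EuclideanSpace.proj] using this
  have hPhiX : Continuous fun x : EuclideanSpace ℝ (Fin m) => Phi (x idx) :=
    Phi_continuous.comp hcoord
  set F : ℝ → C(EuclideanSpace ℝ (Fin m), c00) := fun t =>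
    ⟨fun x => Real.exp (t * (Phi (x idx)).2) • (Phi (x idx)).1,
      ((Real.continuous_exp.comp (continuous_const.mul (continuous_snd.comp hPhiX))).smul
        (continuous_fst.comp hPhiX))⟩ with hF
  have hFapp : ∀ (t : ℝ) (x : EuclideanSpace ℝ (Fin m)),
      F t x = Real.exp (t * (Phi (x idx)).2) • (Phi (x idx)).1 := fun t x => rfl
  -- the embedded line
  set emb : ℝ → EuclideanSpace ℝ (Fin m) := fun r => EuclideanSpace.single idx r with hemb
  have hembc : ∀ r, (emb r) idx = r := by
    intro r
    rw [hemb]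
    simp [EuclideanSpace.single_apply]
  have hembn : ∀ r, ‖emb r‖ = |r| := by
    intro r
    rw [hemb]
    simp [EuclideanSpace.norm_single]
  -- selection of points realizing (b0, s)
  set rsel : ℝ → ℝ := fun s => (Phi_hit b0 s 0).choose with hrsel
  have hrsel_spec : ∀ s, Phi (rsel s) = (b0, s) := fun s => (Phi_hit b0 s 0).choose_spec.2
  -- linear functional-ish map
  set T : C(EuclideanSpace ℝ (Fin m), c00) →ₗ[ℝ] (ℝ → ℝ) :=
    { toFun := fun g => fun s => ((g (emb (rsel s)) : lp (fun _ : ℕ => ℝ) ∞) : ℕ → ℝ) 0,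
      map_add' := by
        intro g g'
        funext s
        simp [lp.coeFn_add]
      map_smul' := by
        intro a g
        funext s
        simp [lp.coeFn_smul] } with hT
  have hTF : ∀ t : ℝ, T (F t) = fun s => Real.exp (t * s) := by
    intro t
    funext s
    rw [hT]
    simp only [LinearMap.coe_mk, AddHom.coe_mk]
    rw [hFapp t (emb (rsel s)), hembc (rsel s), hrsel_spec s]
    simp [lp.coeFn_smul, b0_coord]
  -- linear independence of exponentials
  have hexp_li : LinearIndependent ℝ (fun t : ℝ => fun s : ℝ => Real.exp (t * s)) := by
    set χ : ℝ → (Multiplicative ℝ →* ℝ) := fun t =>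
      { toFun := fun s => Real.exp (t * s.toAdd)
        map_one' := by simp
        map_mul' := by
          intro s₁ s₂
          simp [toAdd_mul, mul_add, Real.exp_add] } with hχ
    have hinj : Function.Injective χ := by
      intro t t' h
      have := congrArg (fun f => f (Multiplicative.ofAdd (1:ℝ))) h
      simp only [hχ, MonoidHom.coe_mk, OneHom.coe_mk, toAdd_ofAdd, mul_one] at this
      exact Real.exp_injective this
    have h := (linearIndependent_monoidHom (Multiplicative ℝ) ℝ).comp χ hinj
    have heq : ((fun f : Multiplicative ℝ →* ℝ => (f : Multiplicative ℝ → ℝ)) ∘ χ)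
        = fun t : ℝ => fun s : ℝ => Real.exp (t * s) := rfl
    rwa [heq] at h
  have hFli : LinearIndependent ℝ F := by
    apply LinearIndependent.of_comp T
    have : (⇑T ∘ F) = fun t : ℝ => fun s : ℝ => Real.exp (t * s) := funext fun t => hTF t
    rw [this]
    exact hexp_li
  refine ⟨ℝ, F, Cardinal.mk_real, hFli, ?_⟩
  intro g hg hg0
  rw [Finsupp.mem_span_range_iff_exists_finsupp] at hg
  obtain ⟨c, hc⟩ := hg
  set G : ℝ → ℝ := fun s => c.sum fun t a => a * Real.exp (t * s) with hG
  have hev : ∀ x, g x = G ((Phi (x idx)).2) • (Phi (x idx)).1 := by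
    intro x
    rw [← hc, Finsupp.sum]
    have h1 : ((∑ t ∈ c.support, c t • F t) : C(EuclideanSpace ℝ (Fin m), c00)) x
        = ∑ t ∈ c.support, (c t • F t) x := by
      rw [ContinuousMap.coe_sum, Finset.sum_apply]
    rw [h1]
    have h2 : ∀ t ∈ c.support, (c t • F t) x
        = (c t * Real.exp (t * (Phi (x idx)).2)) • (Phi (x idx)).1 := by
      intro t _
      rw [ContinuousMap.smul_apply, hFapp, smul_smul]
    rw [Finset.sum_congr rfl h2, ← Finset.sum_smul]
    congr 1
  by_cases hGz : ∀ s, G s = 0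
  · exfalso
    apply hg0
    ext x
    rw [hev x, hGz, zero_smul]
    rfl
  · push_neg at hGz
    obtain ⟨s₀, hs₀⟩ := hGz
    refine ⟨g.continuous, ?_⟩
    intro a hbd
    rw [isBounded_iff_forall_norm_le] at hbd
    obtain ⟨C, hC⟩ := hbd
    obtain ⟨r, hrR, hrP⟩ := Phi_hit ((G s₀)⁻¹ • a) s₀ (|C|+1)
    have hmem : emb r ∈ (⇑g) ⁻¹' {a} := by
      have : g (emb r) = a := by
        rw [hev (emb r), hembc r, hrP]
        exact smul_inv_smul₀ hs₀ a
      simpa [Set.mem_preimage] using this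
    have := hC (emb r) hmem
    rw [hembn r] at this
    have h1 : |C| + 1 ≤ |r| := le_trans hrR (le_abs_self r)
    have h2 : C ≤ |C| := le_abs_self C
    linarith
end
end
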